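/- arXiv:1603.05086 — 3 statements merged into one kernel-verified Lean document; each statement's English description precedes it below -/
import Mathlib

section
/- Assume S_0(γ) is a unit of R. Then: (I) S(γ^0) = S(1) equals the image of p+1 in R and S(γ^p) = S(-1) = 2; (II) if p ≡ ±3 (mod 8), then S(γ^v) is a unit of R for every v ∈ D_0 ∪ D_1 ∪ E_0 ∪ E_1; (III) if p ≡ ±1 (mod 8), then S(γ^v) = 0 for every v ∈ D_0 ∪ D_1 ∪ E_0 and S(γ^v) = 2 for every v ∈ E_1. -/
open Polynomial

/-- The generalized cyclotomic class `D_i = {g^(2n+i) mod 2p : n = 0,...,(p-3)/2}` in `Z_{2p}`. -/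
def Dcl (p g : ℕ) (i : ℕ) : Finset (ZMod (2 * p)) :=
  (Finset.range ((p - 1) / 2)).image (fun n => (g : ZMod (2 * p)) ^ (2 * n + i))

/-- The generalized cyclotomic class `E_i = {2u mod 2p : u ∈ D_i}` in `Z_{2p}`. -/
def Ecl (p g : ℕ) (i : ℕ) : Finset (ZMod (2 * p)) :=
  (Dcl p g i).image (fun u => 2 * u)

/-- The quaternary sequence `(s_u)` over `Z_4` of period `2p`. -/
def seqS (p g : ℕ) (u : ℕ) : ZMod 4 :=
  if (u : ZMod (2 * p)) = 0 ∨ (u : ZMod (2 * p)) ∈ Dcl p g 0 then 0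
  else if (u : ZMod (2 * p)) ∈ Dcl p g 1 then 1
  else if (u : ZMod (2 * p)) = (p : ZMod (2 * p)) ∨ (u : ZMod (2 * p)) ∈ Ecl p g 0 then 2
  else 3

/-- The generating polynomial `S(X) = s_0 + s_1 X + ... + s_{2p-1} X^{2p-1} ∈ Z_4[X]`. -/
noncomputable def genPoly (p g : ℕ) : Polynomial (ZMod 4) :=
  ∑ u ∈ Finset.range (2 * p), Polynomial.C (seqS p g u) * Polynomial.X ^ u

/-- The linear complexity over `Z_4` of the sequence `(s_u)`:
`min{ deg C : C ∈ Z_4[X], C(0) = 1, S(X)C(X) ≡ 0 (mod X^{2p} - 1) }`. -/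
noncomputable def linComplexity (p g : ℕ) : ℕ :=
  sInf { L | ∃ C : Polynomial (ZMod 4), C.eval 0 = 1 ∧ C.natDegree = L ∧
      (Polynomial.X ^ (2 * p) - 1) ∣ genPoly p g * C }

/-- The Galois ring `GR(4^r,4) = Z_4[X]/(f)` for a basic irreducible polynomial `f`. -/
abbrev GaloisR (f : Polynomial (ZMod 4)) : Type :=
  Polynomial (ZMod 4) ⧸ Ideal.span {f}

/-- `S_0(γ) = Σ_{u ∈ D_0} γ^u`, computed with the integer representatives of `D_0`. -/
noncomputable def S0val (p g : ℕ) (f : Polynomial (ZMod 4)) (γ : (GaloisR f)ˣ) : GaloisR f :=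
  ∑ u ∈ Dcl p g 0, (γ : GaloisR f) ^ u.val

namespace S15

open Finset

theorem pow_cycle {R : Type*} [Monoid R] {x : R} {m : ℕ} (h : x ^ m = 1) (n : ℕ) :
    x ^ n = x ^ (n % m) := by
  conv_lhs => rw [← Nat.div_add_mod n m]
  rw [pow_add, pow_mul, h, one_pow, one_mul]

theorem sum_even_odd {M : Type*} [AddCommMonoid M] (f : ℕ → M) (m : ℕ) :
    ∑ k ∈ range (2 * m), f k = (∑ n ∈ range m, f (2 * n)) + ∑ n ∈ range m, f (2 * n + 1) := by
  induction m with
  | zero => simp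
  | succ m ih =>
      rw [show 2 * (m + 1) = (2 * m + 1) + 1 by ring, sum_range_succ, sum_range_succ,
        ih, sum_range_succ, sum_range_succ]
      abel

theorem sum_zmod {M : Type*} [AddCommMonoid M] (n : ℕ) [NeZero n] (F : ℕ → M) :
    ∑ x : ZMod n, F x.val = ∑ k ∈ range n, F k := by
  refine Finset.sum_nbij' (fun x => x.val) (fun k => (k : ZMod n)) ?_ ?_ ?_ ?_ ?_
  · intro a _; exact mem_range.mpr (ZMod.val_lt a)
  · intro a _; exact mem_univ _
  · intro a _; exact ZMod.natCast_rightInverse a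
  · intro a ha; exact ZMod.val_cast_of_lt (mem_range.mp ha)
  · intro a _; rfl

section Main

variable (p g : ℕ) (f : Polynomial (ZMod 4)) (β γ : (GaloisR f)ˣ)

/-- number of elements in each class -/
def Kp : ℕ := (p - 1) / 2

noncomputable def Hs (m : ℕ) : GaloisR f :=
  ∑ n ∈ Finset.range (Kp p), (β : GaloisR f) ^ (((g : ZMod p) ^ (2 * n + m)).val)

noncomputable def fbar : Polynomial (ZMod 2) :=
  f.map (ZMod.castHom (by norm_num : (2:ℕ) ∣ 4) (ZMod 2))

abbrev Fq : Type := Polynomial (ZMod 2) ⧸ Ideal.span {fbar f}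

noncomputable def chi : GaloisR f →+* Fq f :=
  Ideal.Quotient.lift _
    ((Ideal.Quotient.mk (Ideal.span {fbar f})).comp
      (Polynomial.mapRingHom (ZMod.castHom (by norm_num : (2:ℕ) ∣ 4) (ZMod 2))))
    (by
      intro a ha
      obtain ⟨b, rfl⟩ := Ideal.mem_span_singleton.mp ha
      simp only [RingHom.comp_apply, Polynomial.coe_mapRingHom, Polynomial.map_mul]
      rw [Ideal.Quotient.eq_zero_iff_mem]
      exact Ideal.mul_mem_right _ _ (Ideal.subset_span rfl))

variable (hp : p.Prime) (hpodd : Odd p)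
  (hg1 : orderOf (g : ZMod p) = p - 1)
  (hg2 : orderOf (g : ZMod (2 * p)) = p - 1)
  (hfirr : Irreducible (f.map (ZMod.castHom (by norm_num : (2:ℕ) ∣ 4) (ZMod 2))))
  (hβ : orderOf β = p)
  (hγ : (γ : GaloisR f) = -(β : GaloisR f))

set_option linter.unusedSectionVars false

include p g f β γ hp hpodd hg1 hg2 hfirr hβ hγ

lemma pge3 : 3 ≤ p := by
  have h2 := hp.two_le
  obtain ⟨k, hk⟩ := hpodd
  omega

lemma p1even : 2 * Kp p = p - 1 := by
  obtain ⟨k, hk⟩ := hpodd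
  have := hp.two_le
  simp only [Kp]; omega


lemma gg_pow_eq (a b : ℕ) (hab : a % (p-1) = b % (p-1)) :
    (g : ZMod (2*p)) ^ a = (g : ZMod (2*p)) ^ b := by
  conv_lhs => rw [← pow_mod_orderOf]
  conv_rhs => rw [← pow_mod_orderOf]
  rw [hg2, hab]

lemma gp_pow_eq (a b : ℕ) (hab : a % (p-1) = b % (p-1)) :
    (g : ZMod p) ^ a = (g : ZMod p) ^ b := by
  conv_lhs => rw [← pow_mod_orderOf]
  conv_rhs => rw [← pow_mod_orderOf]
  rw [hg1, hab]

lemma gg_isUnit : IsUnit (g : ZMod (2*p)) := by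
  refine IsUnit.of_pow_eq_one (n := p - 1) ?_ ?_
  · rw [← hg2]; exact pow_orderOf_eq_one _
  · have := pge3 p g f β γ hp hpodd hg1 hg2 hfirr hβ hγ; omega

lemma gp_isUnit : IsUnit (g : ZMod p) := by
  refine IsUnit.of_pow_eq_one (n := p - 1) ?_ ?_
  · rw [← hg1]; exact pow_orderOf_eq_one _
  · have := pge3 p g f β γ hp hpodd hg1 hg2 hfirr hβ hγ; omega

lemma gg_pow_inj (a b : ℕ) (ha : a < p - 1) (hb : b < p - 1)
    (h : (g : ZMod (2*p)) ^ a = (g : ZMod (2*p)) ^ b) : a = b := by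
  obtain ⟨u, hu⟩ := gg_isUnit p g f β γ hp hpodd hg1 hg2 hfirr hβ hγ
  have hou : orderOf u = p - 1 := by
    rw [← orderOf_units, hu, hg2]
  have hpow : u ^ a = u ^ b := by
    apply Units.ext
    rw [Units.val_pow_eq_pow_val, Units.val_pow_eq_pow_val, hu, h]
  have hmod := pow_eq_pow_iff_modEq.mp hpow
  rw [hou] at hmod
  unfold Nat.ModEq at hmod
  rw [Nat.mod_eq_of_lt ha, Nat.mod_eq_of_lt hb] at hmod
  exact hmod

lemma coprime2p : Nat.Coprime 2 p := Nat.coprime_two_left.mpr hpodd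

lemma unit_eq_pow (x : ZMod (2*p)) (hx : IsUnit x) :
    ∃ k, k < p - 1 ∧ x = (g : ZMod (2*p)) ^ k := by
  have hp3 := pge3 p g f β γ hp hpodd hg1 hg2 hfirr hβ hγ
  haveI : NeZero (2*p) := ⟨by omega⟩
  obtain ⟨ug, hug⟩ := gg_isUnit p g f β γ hp hpodd hg1 hg2 hfirr hβ hγ
  have hou : orderOf ug = p - 1 := by rw [← orderOf_units, hug, hg2]
  have hcard : Nat.card (ZMod (2*p))ˣ = p - 1 := by
    rw [Nat.card_eq_fintype_card, ZMod.card_units_eq_totient,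
      Nat.totient_mul (coprime2p p g f β γ hp hpodd hg1 hg2 hfirr hβ hγ),
      Nat.totient_two, Nat.totient_prime hp, one_mul]
  have htop : Subgroup.zpowers ug = ⊤ :=
    Subgroup.eq_top_of_card_eq _ (by rw [Nat.card_zpowers, hou, hcard])
  obtain ⟨u, hu⟩ := hx
  have hmem : u ∈ Subgroup.zpowers ug := htop ▸ Subgroup.mem_top u
  obtain ⟨k, hk⟩ := mem_powers_iff_mem_zpowers.mpr hmem
  refine ⟨k % (p-1), Nat.mod_lt _ (by omega), ?_⟩
  have : x = (g : ZMod (2*p)) ^ k := by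
    rw [← hu, ← hk, Units.val_pow_eq_pow_val, hug]
  rw [this]
  exact gg_pow_eq p g f β γ hp hpodd hg1 hg2 hfirr hβ hγ _ _
    (Nat.mod_mod_of_dvd k (dvd_refl (p-1))).symm

lemma zmodp_eq_pow (x : ZMod p) (hx : x ≠ 0) :
    ∃ k, k < p - 1 ∧ x = (g : ZMod p) ^ k := by
  have hp3 := pge3 p g f β γ hp hpodd hg1 hg2 hfirr hβ hγ
  haveI : NeZero p := ⟨by omega⟩
  haveI : Fact p.Prime := ⟨hp⟩
  obtain ⟨ug, hug⟩ := gp_isUnit p g f β γ hp hpodd hg1 hg2 hfirr hβ hγ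
  have hou : orderOf ug = p - 1 := by rw [← orderOf_units, hug, hg1]
  have hcard : Nat.card (ZMod p)ˣ = p - 1 := by
    rw [Nat.card_eq_fintype_card, ZMod.card_units_eq_totient, Nat.totient_prime hp]
  have htop : Subgroup.zpowers ug = ⊤ :=
    Subgroup.eq_top_of_card_eq _ (by rw [Nat.card_zpowers, hou, hcard])
  obtain ⟨u, hu⟩ := hx.isUnit
  have hmem : u ∈ Subgroup.zpowers ug := htop ▸ Subgroup.mem_top u
  obtain ⟨k, hk⟩ := mem_powers_iff_mem_zpowers.mpr hmem
  refine ⟨k % (p-1), Nat.mod_lt _ (by omega), ?_⟩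
  have : x = (g : ZMod p) ^ k := by
    rw [← hu, ← hk, Units.val_pow_eq_pow_val, hug]
  rw [this]
  exact gp_pow_eq p g f β γ hp hpodd hg1 hg2 hfirr hβ hγ _ _
    (Nat.mod_mod_of_dvd k (dvd_refl (p-1))).symm

lemma two_eq_pow : ∃ t, (2 : ZMod p) = (g : ZMod p) ^ t := by
  have hp3 := pge3 p g f β γ hp hpodd hg1 hg2 hfirr hβ hγ
  haveI : NeZero p := ⟨by omega⟩
  have h2 : (2 : ZMod p) ≠ 0 := by
    intro h
    have : ((2 : ℕ) : ZMod p) = 0 := by exact_mod_cast h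
    rw [ZMod.natCast_eq_zero_iff] at this
    have := Nat.le_of_dvd (by norm_num) this
    omega
  obtain ⟨t, _, ht⟩ := zmodp_eq_pow p g f β γ hp hpodd hg1 hg2 hfirr hβ hγ _ h2
  exact ⟨t, ht⟩

lemma bet_pow_p : (β : GaloisR f) ^ p = 1 := by
  rw [← Units.val_pow_eq_pow_val, ← hβ, pow_orderOf_eq_one, Units.val_one]

lemma bet_pow_mod (n : ℕ) : (β : GaloisR f) ^ n = (β : GaloisR f) ^ (n % p) :=
  pow_cycle (bet_pow_p p g f β γ hp hpodd hg1 hg2 hfirr hβ hγ) n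

lemma gam_pow_2p : (γ : GaloisR f) ^ (2*p) = 1 := by
  rw [hγ, Even.neg_pow ⟨p, by ring⟩ ((β : GaloisR f)), mul_comm 2 p, pow_mul,
    bet_pow_p p g f β γ hp hpodd hg1 hg2 hfirr hβ hγ, one_pow]

lemma gam_pow_mod (n : ℕ) : (γ : GaloisR f) ^ n = (γ : GaloisR f) ^ (n % (2*p)) :=
  pow_cycle (gam_pow_2p p g f β γ hp hpodd hg1 hg2 hfirr hβ hγ) n

lemma gam_val_mul (a b : ZMod (2*p)) :
    (γ : GaloisR f) ^ (a.val * b.val) = (γ : GaloisR f) ^ ((a*b).val) := by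
  haveI : NeZero (2*p) := ⟨by have := pge3 p g f β γ hp hpodd hg1 hg2 hfirr hβ hγ; omega⟩
  rw [ZMod.val_mul, ← gam_pow_mod p g f β γ hp hpodd hg1 hg2 hfirr hβ hγ]

lemma gam_pow_even {n : ℕ} (h : n % 2 = 0) :
    (γ : GaloisR f) ^ n = (β : GaloisR f) ^ n := by
  rw [hγ]; exact Even.neg_pow (Nat.even_iff.mpr h) ((β : GaloisR f))

lemma gam_pow_odd {n : ℕ} (h : n % 2 = 1) :
    (γ : GaloisR f) ^ n = -((β : GaloisR f) ^ n) := by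
  rw [hγ]; exact Odd.neg_pow (Nat.odd_iff.mpr h) ((β : GaloisR f))

lemma gam_pow_p : (γ : GaloisR f) ^ p = -1 := by
  rw [gam_pow_odd p g f β γ hp hpodd hg1 hg2 hfirr hβ hγ (Nat.odd_iff.mp hpodd), bet_pow_p p g f β γ hp hpodd hg1 hg2 hfirr hβ hγ]

lemma four_zero : (4 : GaloisR f) = 0 := by
  have h1 : ((4:ℕ) : GaloisR f) = algebraMap (ZMod 4) (GaloisR f) ((4:ℕ) : ZMod 4) := by
    rw [map_natCast]
  have h2 : ((4:ℕ) : ZMod 4) = 0 := by decide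
  rw [h2, map_zero] at h1
  exact_mod_cast h1

lemma bet_pow_nat (n : ℕ) :
    (β : GaloisR f) ^ n = (β : GaloisR f) ^ ((n : ZMod p)).val := by
  haveI : NeZero p := ⟨by have := pge3 p g f β γ hp hpodd hg1 hg2 hfirr hβ hγ; omega⟩
  rw [ZMod.val_natCast, ← bet_pow_mod p g f β γ hp hpodd hg1 hg2 hfirr hβ hγ]

lemma val_p : ((p : ZMod (2*p))).val = p := by
  have := pge3 p g f β γ hp hpodd hg1 hg2 hfirr hβ hγ
  haveI : NeZero (2*p) := ⟨by omega⟩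
  exact ZMod.val_cast_of_lt (by omega)

lemma val_two_mul (x : ZMod (2*p)) : (2 * x).val = 2 * (x.val % p) := by
  have := pge3 p g f β γ hp hpodd hg1 hg2 hfirr hβ hγ
  haveI : NeZero (2*p) := ⟨by omega⟩
  have h2 : ((2 : ZMod (2*p))).val = 2 := by
    have h := ZMod.val_cast_of_lt (n := 2*p) (a := 2) (by omega)
    simpa using h
  rw [ZMod.val_mul, h2, Nat.mul_mod_mul_left]

lemma isUnit_val_coprime (x : ZMod (2*p)) (hx : IsUnit x) : Nat.Coprime x.val (2*p) := by
  obtain ⟨u, rfl⟩ := hx; exact ZMod.val_coe_unit_coprime u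

lemma isUnit_val_odd (x : ZMod (2*p)) (hx : IsUnit x) : x.val % 2 = 1 := by
  have hc := isUnit_val_coprime p g f β γ hp hpodd hg1 hg2 hfirr hβ hγ x hx
  have h2 : Nat.Coprime x.val 2 := Nat.Coprime.coprime_dvd_right ⟨p, rfl⟩ hc
  exact Nat.odd_iff.mp (Nat.coprime_two_right.mp h2)

lemma isUnit_val_not_dvd (x : ZMod (2*p)) (hx : IsUnit x) : ¬ p ∣ x.val := by
  intro hdvd
  have hc := isUnit_val_coprime p g f β γ hp hpodd hg1 hg2 hfirr hβ hγ x hx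
  have hd2 : p ∣ 2*p := dvd_mul_left p 2
  have hgcd : p ∣ Nat.gcd x.val (2*p) := Nat.dvd_gcd hdvd hd2
  rw [Nat.Coprime] at hc
  rw [hc] at hgcd
  have := Nat.le_of_dvd one_pos hgcd
  have := pge3 p g f β γ hp hpodd hg1 hg2 hfirr hβ hγ
  omega

lemma mem_Dcl_iff {i : ℕ} {x : ZMod (2*p)} :
    x ∈ Dcl p g i ↔ ∃ n, n < Kp p ∧ x = (g : ZMod (2*p)) ^ (2*n+i) := by
  constructor
  · intro hx
    obtain ⟨n, hn, he⟩ := Finset.mem_image.mp hx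
    exact ⟨n, Finset.mem_range.mp hn, he.symm⟩
  · rintro ⟨n, hn, rfl⟩
    exact Finset.mem_image.mpr ⟨n, Finset.mem_range.mpr hn, rfl⟩

lemma mem_Ecl_iff {i : ℕ} {x : ZMod (2*p)} :
    x ∈ Ecl p g i ↔ ∃ w ∈ Dcl p g i, x = 2 * w := by
  constructor
  · intro hx
    obtain ⟨w, hw, he⟩ := Finset.mem_image.mp hx
    exact ⟨w, hw, he.symm⟩
  · rintro ⟨w, hw, rfl⟩
    exact Finset.mem_image.mpr ⟨w, hw, rfl⟩

lemma Dcl_isUnit {i : ℕ} {x : ZMod (2*p)} (hx : x ∈ Dcl p g i) : IsUnit x := by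
  obtain ⟨n, _, rfl⟩ := (mem_Dcl_iff p g f β γ hp hpodd hg1 hg2 hfirr hβ hγ).mp hx
  exact (gg_isUnit p g f β γ hp hpodd hg1 hg2 hfirr hβ hγ).pow _

lemma Dcl_ne_zero {i : ℕ} {x : ZMod (2*p)} (hx : x ∈ Dcl p g i) : x ≠ 0 := by
  have := pge3 p g f β γ hp hpodd hg1 hg2 hfirr hβ hγ
  haveI : NeZero (2*p) := ⟨by omega⟩
  intro h0
  have hc := isUnit_val_coprime p g f β γ hp hpodd hg1 hg2 hfirr hβ hγ x (Dcl_isUnit p g f β γ hp hpodd hg1 hg2 hfirr hβ hγ hx)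
  rw [h0, ZMod.val_zero] at hc
  rw [Nat.coprime_zero_left] at hc
  omega

lemma Dcl_ne_p {i : ℕ} {x : ZMod (2*p)} (hx : x ∈ Dcl p g i) : x ≠ (p : ZMod (2*p)) := by
  intro h0
  have hnd := isUnit_val_not_dvd p g f β γ hp hpodd hg1 hg2 hfirr hβ hγ x (Dcl_isUnit p g f β γ hp hpodd hg1 hg2 hfirr hβ hγ hx)
  rw [h0, val_p p g f β γ hp hpodd hg1 hg2 hfirr hβ hγ] at hnd
  exact hnd dvd_rfl

lemma Dcl01 {x : ZMod (2*p)} (h0 : x ∈ Dcl p g 0) (h1 : x ∈ Dcl p g 1) : False := by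
  have hK := p1even p g f β γ hp hpodd hg1 hg2 hfirr hβ hγ
  obtain ⟨n, hn, rfl⟩ := (mem_Dcl_iff p g f β γ hp hpodd hg1 hg2 hfirr hβ hγ).mp h0
  obtain ⟨m, hm, he⟩ := (mem_Dcl_iff p g f β γ hp hpodd hg1 hg2 hfirr hβ hγ).mp h1
  have := gg_pow_inj p g f β γ hp hpodd hg1 hg2 hfirr hβ hγ (2*n+0) (2*m+1) (by omega) (by omega) he
  omega

lemma double_inj {x y : ZMod (2*p)} (hx : IsUnit x) (hy : IsUnit y)
    (h : 2*x = 2*y) : x = y := by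
  have hp3 := pge3 p g f β γ hp hpodd hg1 hg2 hfirr hβ hγ
  haveI : NeZero (2*p) := ⟨by omega⟩
  have hv : (2*x).val = (2*y).val := by rw [h]
  rw [val_two_mul p g f β γ hp hpodd hg1 hg2 hfirr hβ hγ, val_two_mul p g f β γ hp hpodd hg1 hg2 hfirr hβ hγ] at hv
  have hmod : x.val % p = y.val % p := by omega
  have ox := isUnit_val_odd p g f β γ hp hpodd hg1 hg2 hfirr hβ hγ x hx
  have oy := isUnit_val_odd p g f β γ hp hpodd hg1 hg2 hfirr hβ hγ y hy
  have lx : x.val < 2*p := ZMod.val_lt x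
  have ly : y.val < 2*p := ZMod.val_lt y
  have hpo := Nat.odd_iff.mp hpodd
  have hvv : x.val = y.val := by
    have sub_mod : ∀ a : ℕ, p ≤ a → a < 2*p → a % p = a - p := by
      intro a h1 h2
      rw [Nat.mod_eq_sub_mod h1, Nat.mod_eq_of_lt (by omega)]
    rcases Nat.lt_or_ge x.val p with hxp|hxp <;> rcases Nat.lt_or_ge y.val p with hyp|hyp
    · rw [Nat.mod_eq_of_lt hxp, Nat.mod_eq_of_lt hyp] at hmod; exact hmod
    · rw [Nat.mod_eq_of_lt hxp, sub_mod _ hyp ly] at hmod; omega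
    · rw [sub_mod _ hxp lx, Nat.mod_eq_of_lt hyp] at hmod; omega
    · rw [sub_mod _ hxp lx, sub_mod _ hyp ly] at hmod; omega
  calc x = ((x.val : ℕ) : ZMod (2*p)) := (ZMod.natCast_rightInverse x).symm
    _ = ((y.val : ℕ) : ZMod (2*p)) := by rw [hvv]
    _ = y := ZMod.natCast_rightInverse y

lemma Ecl_val_even {i : ℕ} {x : ZMod (2*p)} (hx : x ∈ Ecl p g i) : x.val % 2 = 0 := by
  obtain ⟨w, hw, rfl⟩ := (mem_Ecl_iff p g f β γ hp hpodd hg1 hg2 hfirr hβ hγ).mp hx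
  rw [val_two_mul p g f β γ hp hpodd hg1 hg2 hfirr hβ hγ]
  omega

lemma Ecl_ne_zero {i : ℕ} {x : ZMod (2*p)} (hx : x ∈ Ecl p g i) : x ≠ 0 := by
  have := pge3 p g f β γ hp hpodd hg1 hg2 hfirr hβ hγ
  haveI : NeZero (2*p) := ⟨by omega⟩
  obtain ⟨w, hw, rfl⟩ := (mem_Ecl_iff p g f β γ hp hpodd hg1 hg2 hfirr hβ hγ).mp hx
  have hnd := isUnit_val_not_dvd p g f β γ hp hpodd hg1 hg2 hfirr hβ hγ w (Dcl_isUnit p g f β γ hp hpodd hg1 hg2 hfirr hβ hγ hw)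
  have hmod : w.val % p ≠ 0 := fun h0 => hnd (Nat.dvd_of_mod_eq_zero h0)
  intro h0
  have : (2*w).val = 0 := by rw [h0, ZMod.val_zero]
  rw [val_two_mul p g f β γ hp hpodd hg1 hg2 hfirr hβ hγ] at this
  omega

lemma Ecl_ne_p {i : ℕ} {x : ZMod (2*p)} (hx : x ∈ Ecl p g i) : x ≠ (p : ZMod (2*p)) := by
  intro h0
  have he := Ecl_val_even p g f β γ hp hpodd hg1 hg2 hfirr hβ hγ hx
  rw [h0, val_p p g f β γ hp hpodd hg1 hg2 hfirr hβ hγ] at he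
  have := Nat.odd_iff.mp hpodd
  omega

lemma Ecl_notin_Dcl {i j : ℕ} {x : ZMod (2*p)} (hx : x ∈ Ecl p g i) : x ∉ Dcl p g j := by
  intro hd
  have he := Ecl_val_even p g f β γ hp hpodd hg1 hg2 hfirr hβ hγ hx
  have ho := isUnit_val_odd p g f β γ hp hpodd hg1 hg2 hfirr hβ hγ x (Dcl_isUnit p g f β γ hp hpodd hg1 hg2 hfirr hβ hγ hd)
  omega

lemma Ecl01 {x : ZMod (2*p)} (h0 : x ∈ Ecl p g 0) (h1 : x ∈ Ecl p g 1) : False := by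
  obtain ⟨w, hw, rfl⟩ := (mem_Ecl_iff p g f β γ hp hpodd hg1 hg2 hfirr hβ hγ).mp h0
  obtain ⟨w', hw', he⟩ := (mem_Ecl_iff p g f β γ hp hpodd hg1 hg2 hfirr hβ hγ).mp h1
  have : w = w' := double_inj p g f β γ hp hpodd hg1 hg2 hfirr hβ hγ (Dcl_isUnit p g f β γ hp hpodd hg1 hg2 hfirr hβ hγ hw) (Dcl_isUnit p g f β γ hp hpodd hg1 hg2 hfirr hβ hγ hw') he
  exact Dcl01 p g f β γ hp hpodd hg1 hg2 hfirr hβ hγ hw (this ▸ hw')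

lemma Dcl_card (i : ℕ) (hi : i < 2) : (Dcl p g i).card = Kp p := by
  have hK := p1even p g f β γ hp hpodd hg1 hg2 hfirr hβ hγ
  have hinj : Set.InjOn (fun n => (g : ZMod (2*p)) ^ (2*n+i)) (Finset.range ((p-1)/2)) := by
    intro a ha b hb hab
    simp only [Finset.coe_range, Set.mem_Iio] at ha hb
    have h2K : 2 * ((p-1)/2) = p - 1 := by rw [show ((p-1)/2) = Kp p from rfl]; omega
    have := gg_pow_inj p g f β γ hp hpodd hg1 hg2 hfirr hβ hγ (2*a+i) (2*b+i) (by omega) (by omega) hab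
    omega
  rw [Dcl, Finset.card_image_of_injOn hinj, Finset.card_range]
  rfl

lemma Ecl_card (i : ℕ) (hi : i < 2) : (Ecl p g i).card = Kp p := by
  have hinj : Set.InjOn (fun u : ZMod (2*p) => 2*u) (Dcl p g i) := by
    intro a ha b hb hab
    exact double_inj p g f β γ hp hpodd hg1 hg2 hfirr hβ hγ (Dcl_isUnit p g f β γ hp hpodd hg1 hg2 hfirr hβ hγ ha) (Dcl_isUnit p g f β γ hp hpodd hg1 hg2 hfirr hβ hγ hb) hab
  rw [Ecl, Finset.card_image_of_injOn hinj, Dcl_card p g f β γ hp hpodd hg1 hg2 hfirr hβ hγ i hi]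

lemma cover (x : ZMod (2*p)) :
    x = 0 ∨ x = (p : ZMod (2*p)) ∨ x ∈ Dcl p g 0 ∨ x ∈ Dcl p g 1 ∨
      x ∈ Ecl p g 0 ∨ x ∈ Ecl p g 1 := by
  have hp3 := pge3 p g f β γ hp hpodd hg1 hg2 hfirr hβ hγ
  have hK := p1even p g f β γ hp hpodd hg1 hg2 hfirr hβ hγ
  have hpo := Nat.odd_iff.mp hpodd
  haveI : NeZero (2*p) := ⟨by omega⟩
  have hvlt : x.val < 2*p := ZMod.val_lt x
  have hncv : ((x.val : ℕ) : ZMod (2*p)) = x := ZMod.natCast_rightInverse x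
  rcases Nat.even_or_odd x.val with he|ho
  · -- even value
    obtain ⟨m, hm⟩ : ∃ m, x.val = 2*m := by obtain ⟨k, hk⟩ := he; exact ⟨k, by omega⟩
    by_cases hm0 : m = 0
    · left; rw [← hncv, hm, hm0]; norm_num
    · have hmp : m < p := by omega
      have hpd : ¬ p ∣ m := fun hd =>
        absurd (Nat.le_of_dvd (Nat.pos_of_ne_zero hm0) hd) (by omega)
      set w' : ℕ := if m % 2 = 1 then m else m + p with hw'
      have hodd : w' % 2 = 1 := by rw [hw']; split <;> omega
      have hpd' : ¬ p ∣ w' := by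
        rw [hw']; split
        · exact hpd
        · intro hd
          exact hpd (by have := Nat.dvd_sub hd (dvd_refl p); simpa using this)
      have hco : Nat.Coprime w' (2*p) := by
        refine Nat.Coprime.mul_right ?_ ?_
        · exact Nat.coprime_two_right.mpr (Nat.odd_iff.mpr hodd)
        · exact Nat.coprime_comm.mp ((Nat.Prime.coprime_iff_not_dvd hp).mpr hpd')
      have hu : IsUnit ((w' : ℕ) : ZMod (2*p)) := (ZMod.isUnit_iff_coprime w' (2*p)).mpr hco
      have h2w : x = 2 * ((w' : ℕ) : ZMod (2*p)) := by
        rw [hw']; split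
        · rw [← hncv, hm]; push_cast; ring
        · calc x = ((2*m : ℕ) : ZMod (2*p)) := by rw [← hncv, hm]
            _ = ((2*m : ℕ) : ZMod (2*p)) + ((2*p : ℕ) : ZMod (2*p)) := by
                rw [ZMod.natCast_self, add_zero]
            _ = ((2*m + 2*p : ℕ) : ZMod (2*p)) := by rw [Nat.cast_add]
            _ = 2 * ((m + p : ℕ) : ZMod (2*p)) := by push_cast; ring
      obtain ⟨k, hk, hkeq⟩ := unit_eq_pow p g f β γ hp hpodd hg1 hg2 hfirr hβ hγ _ hu
      rcases Nat.even_or_odd k with hke|hko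
      · obtain ⟨n, hn⟩ := hke
        right; right; right; right; left
        refine (mem_Ecl_iff p g f β γ hp hpodd hg1 hg2 hfirr hβ hγ).mpr ⟨_, (mem_Dcl_iff p g f β γ hp hpodd hg1 hg2 hfirr hβ hγ).mpr ⟨n, by omega, ?_⟩, h2w⟩
        rw [hkeq]
        exact congrArg (fun e => (g : ZMod (2*p)) ^ e) (by omega)
      · obtain ⟨n, hn⟩ := hko
        right; right; right; right; right
        refine (mem_Ecl_iff p g f β γ hp hpodd hg1 hg2 hfirr hβ hγ).mpr ⟨_, (mem_Dcl_iff p g f β γ hp hpodd hg1 hg2 hfirr hβ hγ).mpr ⟨n, by omega, ?_⟩, h2w⟩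
        rw [hkeq]
        exact congrArg (fun e => (g : ZMod (2*p)) ^ e) (by omega)
  · -- odd value
    by_cases hpd : p ∣ x.val
    · right; left
      have hov : x.val % 2 = 1 := Nat.odd_iff.mp ho
      have : x.val = p := by
        obtain ⟨c', hc⟩ := hpd
        have hc2 : c' < 2 := by
          by_contra hcc
          push_neg at hcc
          have : p * 2 ≤ p * c' := Nat.mul_le_mul_left p hcc
          omega
        rcases (by omega : c' = 0 ∨ c' = 1) with rfl|rfl <;> omega
      rw [← hncv, this]
    · have hco : Nat.Coprime x.val (2*p) := by
        refine Nat.Coprime.mul_right ?_ ?_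
        · exact Nat.coprime_two_right.mpr ho
        · exact Nat.coprime_comm.mp ((Nat.Prime.coprime_iff_not_dvd hp).mpr hpd)
      have hu : IsUnit x := by
        rw [← hncv]; exact (ZMod.isUnit_iff_coprime _ (2*p)).mpr hco
      obtain ⟨k, hk, hkeq⟩ := unit_eq_pow p g f β γ hp hpodd hg1 hg2 hfirr hβ hγ _ hu
      rcases Nat.even_or_odd k with hke|hko
      · obtain ⟨n, hn⟩ := hke
        right; right; left
        refine (mem_Dcl_iff p g f β γ hp hpodd hg1 hg2 hfirr hβ hγ).mpr ⟨n, by omega, ?_⟩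
        rw [hkeq]
        exact congrArg (fun e => (g : ZMod (2*p)) ^ e) (by omega)
      · obtain ⟨n, hn⟩ := hko
        right; right; right; left
        refine (mem_Dcl_iff p g f β γ hp hpodd hg1 hg2 hfirr hβ hγ).mpr ⟨n, by omega, ?_⟩
        rw [hkeq]
        exact congrArg (fun e => (g : ZMod (2*p)) ^ e) (by omega)

lemma p_cast_ne_zero : (p : ZMod (2*p)) ≠ 0 := by
  intro h
  have hv := congrArg ZMod.val h
  have hp3 := pge3 p g f β γ hp hpodd hg1 hg2 hfirr hβ hγ
  haveI : NeZero (2*p) := ⟨by omega⟩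
  rw [val_p p g f β γ hp hpodd hg1 hg2 hfirr hβ hγ, ZMod.val_zero] at hv
  omega

lemma seq_D0 {x : ZMod (2*p)} (hx : x ∈ Dcl p g 0) : seqS p g x.val = 0 := by
  have hp3 := pge3 p g f β γ hp hpodd hg1 hg2 hfirr hβ hγ
  haveI : NeZero (2*p) := ⟨by omega⟩
  have hncv : ((x.val : ℕ) : ZMod (2*p)) = x := ZMod.natCast_rightInverse x
  simp only [seqS, hncv]
  rw [if_pos (Or.inr hx)]

lemma seq_D1 {x : ZMod (2*p)} (hx : x ∈ Dcl p g 1) : seqS p g x.val = 1 := by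
  have hp3 := pge3 p g f β γ hp hpodd hg1 hg2 hfirr hβ hγ
  haveI : NeZero (2*p) := ⟨by omega⟩
  have hncv : ((x.val : ℕ) : ZMod (2*p)) = x := ZMod.natCast_rightInverse x
  simp only [seqS, hncv]
  rw [if_neg, if_pos hx]
  rintro (h0|h0)
  · exact Dcl_ne_zero p g f β γ hp hpodd hg1 hg2 hfirr hβ hγ hx h0
  · exact Dcl01 p g f β γ hp hpodd hg1 hg2 hfirr hβ hγ h0 hx

lemma seq_E0 {x : ZMod (2*p)} (hx : x ∈ Ecl p g 0) : seqS p g x.val = 2 := by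
  have hp3 := pge3 p g f β γ hp hpodd hg1 hg2 hfirr hβ hγ
  haveI : NeZero (2*p) := ⟨by omega⟩
  have hncv : ((x.val : ℕ) : ZMod (2*p)) = x := ZMod.natCast_rightInverse x
  simp only [seqS, hncv]
  rw [if_neg, if_neg (Ecl_notin_Dcl p g f β γ hp hpodd hg1 hg2 hfirr hβ hγ hx), if_pos (Or.inr hx)]
  rintro (h0|h0)
  · exact Ecl_ne_zero p g f β γ hp hpodd hg1 hg2 hfirr hβ hγ hx h0
  · exact Ecl_notin_Dcl p g f β γ hp hpodd hg1 hg2 hfirr hβ hγ hx h0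

lemma seq_E1 {x : ZMod (2*p)} (hx : x ∈ Ecl p g 1) : seqS p g x.val = 3 := by
  have hp3 := pge3 p g f β γ hp hpodd hg1 hg2 hfirr hβ hγ
  haveI : NeZero (2*p) := ⟨by omega⟩
  have hncv : ((x.val : ℕ) : ZMod (2*p)) = x := ZMod.natCast_rightInverse x
  simp only [seqS, hncv]
  rw [if_neg, if_neg (Ecl_notin_Dcl p g f β γ hp hpodd hg1 hg2 hfirr hβ hγ hx), if_neg]
  · rintro (h0|h0)
    · exact Ecl_ne_p p g f β γ hp hpodd hg1 hg2 hfirr hβ hγ hx h0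
    · exact Ecl01 p g f β γ hp hpodd hg1 hg2 hfirr hβ hγ h0 hx
  · rintro (h0|h0)
    · exact Ecl_ne_zero p g f β γ hp hpodd hg1 hg2 hfirr hβ hγ hx h0
    · exact Ecl_notin_Dcl p g f β γ hp hpodd hg1 hg2 hfirr hβ hγ hx h0

lemma seq_p : seqS p g ((p : ZMod (2*p)).val) = 2 := by
  have hp3 := pge3 p g f β γ hp hpodd hg1 hg2 hfirr hβ hγ
  haveI : NeZero (2*p) := ⟨by omega⟩
  have hncv : (((p : ZMod (2*p)).val : ℕ) : ZMod (2*p)) = (p : ZMod (2*p)) :=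
    ZMod.natCast_rightInverse _
  simp only [seqS, hncv]
  rw [if_neg, if_neg, if_pos (Or.inl trivial)]
  · intro h0; exact Dcl_ne_p p g f β γ hp hpodd hg1 hg2 hfirr hβ hγ h0 rfl
  · rintro (h0|h0)
    · exact p_cast_ne_zero p g f β γ hp hpodd hg1 hg2 hfirr hβ hγ h0
    · exact Dcl_ne_p p g f β γ hp hpodd hg1 hg2 hfirr hβ hγ h0 rfl

lemma eval_gen (t : ℕ) :
    Polynomial.aeval ((γ : GaloisR f) ^ t) (genPoly p g) =
      (∑ x ∈ Dcl p g 1, (γ : GaloisR f) ^ (t * x.val))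
      + 2 * (∑ x ∈ Ecl p g 0, (γ : GaloisR f) ^ (t * x.val))
      + 3 * (∑ x ∈ Ecl p g 1, (γ : GaloisR f) ^ (t * x.val))
      + 2 * (γ : GaloisR f) ^ (t * p) := by
  classical
  have hp3 := pge3 p g f β γ hp hpodd hg1 hg2 hfirr hβ hγ
  haveI : NeZero (2*p) := ⟨by omega⟩
  have hstep1 : Polynomial.aeval ((γ : GaloisR f) ^ t) (genPoly p g)
      = ∑ u ∈ Finset.range (2*p),
          algebraMap (ZMod 4) (GaloisR f) (seqS p g u) * (γ : GaloisR f) ^ (t * u) := by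
    rw [genPoly, map_sum]
    refine Finset.sum_congr rfl (fun u _ => ?_)
    rw [map_mul, Polynomial.aeval_C, map_pow, Polynomial.aeval_X, ← pow_mul]
  rw [hstep1, ← sum_zmod (2*p)
    (fun u => algebraMap (ZMod 4) (GaloisR f) (seqS p g u) * (γ : GaloisR f) ^ (t * u))]
  have hpne : (0 : ZMod (2*p)) ≠ (p : ZMod (2*p)) := fun h => p_cast_ne_zero p g f β γ hp hpodd hg1 hg2 hfirr hβ hγ h.symm
  have hdisj1 : Disjoint (Dcl p g 0) (Dcl p g 1) :=
    Finset.disjoint_left.mpr (fun a ha hb => (Dcl01 p g f β γ hp hpodd hg1 hg2 hfirr hβ hγ ha hb).elim)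
  have hdisj2 : Disjoint (Dcl p g 0 ∪ Dcl p g 1) (Ecl p g 0) :=
    Finset.disjoint_right.mpr (fun a ha hb => by
      rcases Finset.mem_union.mp hb with h|h <;> exact Ecl_notin_Dcl p g f β γ hp hpodd hg1 hg2 hfirr hβ hγ ha h)
  have hdisj3 : Disjoint (Dcl p g 0 ∪ Dcl p g 1 ∪ Ecl p g 0) (Ecl p g 1) :=
    Finset.disjoint_right.mpr (fun a ha hb => by
      rcases Finset.mem_union.mp hb with h|h
      · rcases Finset.mem_union.mp h with h2|h2 <;> exact Ecl_notin_Dcl p g f β γ hp hpodd hg1 hg2 hfirr hβ hγ ha h2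
      · exact Ecl01 p g f β γ hp hpodd hg1 hg2 hfirr hβ hγ h ha)
  have hdisj4 : Disjoint (Dcl p g 0 ∪ Dcl p g 1 ∪ Ecl p g 0 ∪ Ecl p g 1)
      ({0, (p : ZMod (2*p))} : Finset (ZMod (2*p))) :=
    Finset.disjoint_right.mpr (fun a ha hb => by
      rcases Finset.mem_insert.mp ha with rfl|ha2
      · rcases Finset.mem_union.mp hb with h|h
        · rcases Finset.mem_union.mp h with h2|h2
          · rcases Finset.mem_union.mp h2 with h3|h3 <;> exact Dcl_ne_zero p g f β γ hp hpodd hg1 hg2 hfirr hβ hγ h3 rfl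
          · exact Ecl_ne_zero p g f β γ hp hpodd hg1 hg2 hfirr hβ hγ h2 rfl
        · exact Ecl_ne_zero p g f β γ hp hpodd hg1 hg2 hfirr hβ hγ h rfl
      · rw [Finset.mem_singleton] at ha2
        subst ha2
        rcases Finset.mem_union.mp hb with h|h
        · rcases Finset.mem_union.mp h with h2|h2
          · rcases Finset.mem_union.mp h2 with h3|h3 <;> exact Dcl_ne_p p g f β γ hp hpodd hg1 hg2 hfirr hβ hγ h3 rfl
          · exact Ecl_ne_p p g f β γ hp hpodd hg1 hg2 hfirr hβ hγ h2 rfl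
        · exact Ecl_ne_p p g f β γ hp hpodd hg1 hg2 hfirr hβ hγ h rfl)
  have hpart : (Finset.univ : Finset (ZMod (2*p))) =
      (Dcl p g 0 ∪ Dcl p g 1 ∪ Ecl p g 0 ∪ Ecl p g 1 ∪ {0, (p : ZMod (2*p))}) := by
    apply Finset.ext
    intro x
    simp only [Finset.mem_univ, true_iff, Finset.mem_union, Finset.mem_insert,
      Finset.mem_singleton]
    rcases cover p g f β γ hp hpodd hg1 hg2 hfirr hβ hγ x with h|h|h|h|h|h <;> tauto
  rw [hpart, Finset.sum_union hdisj4, Finset.sum_union hdisj3, Finset.sum_union hdisj2,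
    Finset.sum_union hdisj1, Finset.sum_pair hpne]
  have e0 : ∑ x ∈ Dcl p g 0,
      algebraMap (ZMod 4) (GaloisR f) (seqS p g x.val) * (γ : GaloisR f) ^ (t * x.val) = 0 :=
    Finset.sum_eq_zero (fun x hx => by rw [seq_D0 p g f β γ hp hpodd hg1 hg2 hfirr hβ hγ hx, map_zero, zero_mul])
  have e1 : ∑ x ∈ Dcl p g 1,
      algebraMap (ZMod 4) (GaloisR f) (seqS p g x.val) * (γ : GaloisR f) ^ (t * x.val)
      = ∑ x ∈ Dcl p g 1, (γ : GaloisR f) ^ (t * x.val) :=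
    Finset.sum_congr rfl (fun x hx => by rw [seq_D1 p g f β γ hp hpodd hg1 hg2 hfirr hβ hγ hx, map_one, one_mul])
  have e2 : ∑ x ∈ Ecl p g 0,
      algebraMap (ZMod 4) (GaloisR f) (seqS p g x.val) * (γ : GaloisR f) ^ (t * x.val)
      = 2 * ∑ x ∈ Ecl p g 0, (γ : GaloisR f) ^ (t * x.val) := by
    rw [Finset.mul_sum]
    exact Finset.sum_congr rfl (fun x hx => by rw [seq_E0 p g f β γ hp hpodd hg1 hg2 hfirr hβ hγ hx, map_ofNat])
  have e3 : ∑ x ∈ Ecl p g 1,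
      algebraMap (ZMod 4) (GaloisR f) (seqS p g x.val) * (γ : GaloisR f) ^ (t * x.val)
      = 3 * ∑ x ∈ Ecl p g 1, (γ : GaloisR f) ^ (t * x.val) := by
    rw [Finset.mul_sum]
    exact Finset.sum_congr rfl (fun x hx => by rw [seq_E1 p g f β γ hp hpodd hg1 hg2 hfirr hβ hγ hx, map_ofNat])
  have f0 : algebraMap (ZMod 4) (GaloisR f) (seqS p g (0 : ZMod (2*p)).val)
      * (γ : GaloisR f) ^ (t * (0 : ZMod (2*p)).val) = 0 := by
    have : seqS p g (0 : ZMod (2*p)).val = 0 := by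
      rw [ZMod.val_zero]
      simp only [seqS, Nat.cast_zero]
      rw [if_pos (Or.inl trivial)]
    rw [this, map_zero, zero_mul]
  have fp : algebraMap (ZMod 4) (GaloisR f) (seqS p g ((p : ZMod (2*p)).val))
      * (γ : GaloisR f) ^ (t * ((p : ZMod (2*p)).val)) = 2 * (γ : GaloisR f) ^ (t * p) := by
    rw [seq_p p g f β γ hp hpodd hg1 hg2 hfirr hβ hγ, val_p p g f β γ hp hpodd hg1 hg2 hfirr hβ hγ, map_ofNat]
  rw [e0, e1, e2, e3, f0, fp]
  ring

lemma Hs_step (m : ℕ) : Hs p g f β (m+2) = Hs p g f β m := by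
  have hK := p1even p g f β γ hp hpodd hg1 hg2 hfirr hβ hγ
  simp only [Hs]
  have hgeq : ∀ n : ℕ, ((g : ZMod p)) ^ (2*n+(m+2)) = ((g : ZMod p)) ^ (2*(n+1)+m) := by
    intro n; congr 1; ring
  have step1 : ∑ n ∈ Finset.range (Kp p), (β : GaloisR f) ^ (((g : ZMod p)^(2*n+(m+2))).val)
      = ∑ n ∈ Finset.range (Kp p), (β : GaloisR f) ^ (((g : ZMod p)^(2*(n+1)+m)).val) := by
    refine Finset.sum_congr rfl fun n _ => ?_
    rw [hgeq n]
  rw [step1]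
  have h1 := Finset.sum_range_succ
    (fun n => (β : GaloisR f) ^ (((g : ZMod p)^(2*n+m)).val)) (Kp p)
  have h2 := Finset.sum_range_succ'
    (fun n => (β : GaloisR f) ^ (((g : ZMod p)^(2*n+m)).val)) (Kp p)
  have hKm : ((g : ZMod p)) ^ (2*(Kp p)+m) = ((g : ZMod p)) ^ (2*0+m) := by
    apply gp_pow_eq p g f β γ hp hpodd hg1 hg2 hfirr hβ hγ
    rw [hK, Nat.add_mod_left]
    norm_num
  rw [hKm] at h1
  exact add_right_cancel (h2.symm.trans h1)

lemma Hs_shift (q m : ℕ) : Hs p g f β (2*q+m) = Hs p g f β m := by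
  induction q with
  | zero => norm_num
  | succ q ih => rw [show 2*(q+1)+m = (2*q+m)+2 by ring, Hs_step p g f β γ hp hpodd hg1 hg2 hfirr hβ hγ, ih]

lemma Hs_mod (m : ℕ) : Hs p g f β m = Hs p g f β (m % 2) := by
  conv_lhs => rw [← Nat.div_add_mod m 2]
  exact Hs_shift p g f β γ hp hpodd hg1 hg2 hfirr hβ hγ _ _

lemma cast_down (x : ZMod (2*p)) :
    ((x.val : ℕ) : ZMod p) = ZMod.castHom (dvd_mul_left p 2) (ZMod p) x := by
  have := pge3 p g f β γ hp hpodd hg1 hg2 hfirr hβ hγ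
  haveI : NeZero (2*p) := ⟨by omega⟩
  rw [ZMod.natCast_val, ZMod.castHom_apply]

lemma gam_gg_odd (e : ℕ) :
    (γ : GaloisR f) ^ (((g : ZMod (2*p))^e).val)
      = -((β : GaloisR f) ^ (((g : ZMod p)^e).val)) := by
  have ho : ((g : ZMod (2*p))^e).val % 2 = 1 :=
    isUnit_val_odd p g f β γ hp hpodd hg1 hg2 hfirr hβ hγ _ ((gg_isUnit p g f β γ hp hpodd hg1 hg2 hfirr hβ hγ).pow e)
  rw [gam_pow_odd p g f β γ hp hpodd hg1 hg2 hfirr hβ hγ ho, bet_pow_nat p g f β γ hp hpodd hg1 hg2 hfirr hβ hγ]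
  have hc : ((((g : ZMod (2*p))^e).val : ℕ) : ZMod p) = ((g : ZMod p))^e := by
    rw [cast_down p g f β γ hp hpodd hg1 hg2 hfirr hβ hγ, map_pow, map_natCast]
  rw [hc]

lemma gam_two_gg (e : ℕ) (t : ℕ) (ht : (2 : ZMod p) = (g : ZMod p) ^ t) :
    (γ : GaloisR f) ^ ((2 * (g : ZMod (2*p))^e).val)
      = (β : GaloisR f) ^ (((g : ZMod p)^(t+e)).val) := by
  have hev : (2 * (g : ZMod (2*p))^e).val % 2 = 0 := by rw [val_two_mul p g f β γ hp hpodd hg1 hg2 hfirr hβ hγ]; omega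
  rw [gam_pow_even p g f β γ hp hpodd hg1 hg2 hfirr hβ hγ hev, bet_pow_nat p g f β γ hp hpodd hg1 hg2 hfirr hβ hγ]
  have hc : (((2 * (g : ZMod (2*p))^e).val : ℕ) : ZMod p) = ((g : ZMod p))^(t+e) := by
    rw [cast_down p g f β γ hp hpodd hg1 hg2 hfirr hβ hγ, map_mul, map_pow, map_natCast, map_ofNat, ht, ← pow_add]
  rw [hc]

lemma gam_four_gg (e : ℕ) (t : ℕ) (ht : (2 : ZMod p) = (g : ZMod p) ^ t) :
    (γ : GaloisR f) ^ ((4 * (g : ZMod (2*p))^e).val)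
      = (β : GaloisR f) ^ (((g : ZMod p)^(2*t+e)).val) := by
  have h42 : (4 : ZMod (2*p)) * (g : ZMod (2*p))^e = 2 * (2 * (g : ZMod (2*p))^e) := by ring
  have hev : (4 * (g : ZMod (2*p))^e).val % 2 = 0 := by
    rw [h42, val_two_mul p g f β γ hp hpodd hg1 hg2 hfirr hβ hγ]; omega
  rw [gam_pow_even p g f β γ hp hpodd hg1 hg2 hfirr hβ hγ hev, bet_pow_nat p g f β γ hp hpodd hg1 hg2 hfirr hβ hγ]
  have hc : (((4 * (g : ZMod (2*p))^e).val : ℕ) : ZMod p) = ((g : ZMod p))^(2*t+e) := by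
    rw [cast_down p g f β γ hp hpodd hg1 hg2 hfirr hβ hγ, map_mul, map_pow, map_natCast, map_ofNat,
      show (4 : ZMod p) = 2*2 by norm_num, ht, ← pow_add, ← pow_add,
      show t+t+e = 2*t+e by ring]
  rw [hc]

lemma dcl_inj (j : ℕ) (hj : j < 2) : ∀ a ∈ Finset.range ((p-1)/2), ∀ b ∈ Finset.range ((p-1)/2),
    (g : ZMod (2*p))^(2*a+j) = (g : ZMod (2*p))^(2*b+j) → a = b := by
  intro a ha b hb hab
  rw [Finset.mem_range] at ha hb
  have h2K : 2*((p-1)/2) = p - 1 := by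
    have := p1even p g f β γ hp hpodd hg1 hg2 hfirr hβ hγ; simpa [Kp] using this
  have := gg_pow_inj p g f β γ hp hpodd hg1 hg2 hfirr hβ hγ _ _ (by omega) (by omega) hab
  omega

lemma ecl_inj (j : ℕ) : ∀ a ∈ Dcl p g j, ∀ b ∈ Dcl p g j, 2*a = 2*b → a = b := by
  intro a ha b hb hab
  exact double_inj p g f β γ hp hpodd hg1 hg2 hfirr hβ hγ (Dcl_isUnit p g f β γ hp hpodd hg1 hg2 hfirr hβ hγ ha) (Dcl_isUnit p g f β γ hp hpodd hg1 hg2 hfirr hβ hγ hb) hab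

lemma sum_Dcl (k j : ℕ) (hj : j < 2) :
    ∑ x ∈ Dcl p g j, (γ : GaloisR f) ^ (((g : ZMod (2*p))^k).val * x.val)
      = -(Hs p g f β (k+j)) := by
  rw [Dcl, Finset.sum_image (dcl_inj p g f β γ hp hpodd hg1 hg2 hfirr hβ hγ j hj), Hs, ← Finset.sum_neg_distrib]
  simp only [Kp]
  refine Finset.sum_congr rfl fun n _ => ?_
  rw [gam_val_mul p g f β γ hp hpodd hg1 hg2 hfirr hβ hγ, ← pow_add, gam_gg_odd p g f β γ hp hpodd hg1 hg2 hfirr hβ hγ,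
    show k+(2*n+j) = 2*n+(k+j) by ring]

lemma sum_Ecl (k j : ℕ) (hj : j < 2) (t : ℕ) (ht : (2 : ZMod p) = (g : ZMod p) ^ t) :
    ∑ x ∈ Ecl p g j, (γ : GaloisR f) ^ (((g : ZMod (2*p))^k).val * x.val)
      = Hs p g f β (t+k+j) := by
  rw [Ecl, Finset.sum_image (ecl_inj p g f β γ hp hpodd hg1 hg2 hfirr hβ hγ j), Dcl, Finset.sum_image (dcl_inj p g f β γ hp hpodd hg1 hg2 hfirr hβ hγ j hj), Hs]
  simp only [Kp]
  refine Finset.sum_congr rfl fun n _ => ?_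
  rw [gam_val_mul p g f β γ hp hpodd hg1 hg2 hfirr hβ hγ,
    show (g : ZMod (2*p))^k * (2*(g : ZMod (2*p))^(2*n+j)) = 2 * (g : ZMod (2*p))^(k+(2*n+j)) by
      ring,
    gam_two_gg p g f β γ hp hpodd hg1 hg2 hfirr hβ hγ _ t ht, show t+(k+(2*n+j)) = 2*n+(t+k+j) by ring]

lemma sum_Dcl2 (k j : ℕ) (hj : j < 2) (t : ℕ) (ht : (2 : ZMod p) = (g : ZMod p) ^ t) :
    ∑ x ∈ Dcl p g j, (γ : GaloisR f) ^ ((2 * (g : ZMod (2*p))^k).val * x.val)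
      = Hs p g f β (t+k+j) := by
  rw [Dcl, Finset.sum_image (dcl_inj p g f β γ hp hpodd hg1 hg2 hfirr hβ hγ j hj), Hs]
  simp only [Kp]
  refine Finset.sum_congr rfl fun n _ => ?_
  rw [gam_val_mul p g f β γ hp hpodd hg1 hg2 hfirr hβ hγ,
    show (2 * (g : ZMod (2*p))^k) * ((g : ZMod (2*p))^(2*n+j)) = 2 * (g : ZMod (2*p))^(k+(2*n+j)) by
      ring,
    gam_two_gg p g f β γ hp hpodd hg1 hg2 hfirr hβ hγ _ t ht, show t+(k+(2*n+j)) = 2*n+(t+k+j) by ring]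

lemma sum_Ecl2 (k j : ℕ) (hj : j < 2) (t : ℕ) (ht : (2 : ZMod p) = (g : ZMod p) ^ t) :
    ∑ x ∈ Ecl p g j, (γ : GaloisR f) ^ ((2 * (g : ZMod (2*p))^k).val * x.val)
      = Hs p g f β (2*t+k+j) := by
  rw [Ecl, Finset.sum_image (ecl_inj p g f β γ hp hpodd hg1 hg2 hfirr hβ hγ j), Dcl, Finset.sum_image (dcl_inj p g f β γ hp hpodd hg1 hg2 hfirr hβ hγ j hj), Hs]
  simp only [Kp]
  refine Finset.sum_congr rfl fun n _ => ?_
  rw [gam_val_mul p g f β γ hp hpodd hg1 hg2 hfirr hβ hγ,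
    show (2 * (g : ZMod (2*p))^k) * (2 * (g : ZMod (2*p))^(2*n+j))
        = 4 * (g : ZMod (2*p))^(k+(2*n+j)) by ring,
    gam_four_gg p g f β γ hp hpodd hg1 hg2 hfirr hβ hγ _ t ht, show 2*t+(k+(2*n+j)) = 2*n+(2*t+k+j) by ring]

lemma gp_pow_iff (a b : ℕ) :
    (g : ZMod p)^a = (g : ZMod p)^b ↔ a % (p-1) = b % (p-1) := by
  constructor
  · intro h
    obtain ⟨u, hu⟩ := gp_isUnit p g f β γ hp hpodd hg1 hg2 hfirr hβ hγ
    have hou : orderOf u = p - 1 := by rw [← orderOf_units, hu, hg1]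
    have hpow : u ^ a = u ^ b := by
      apply Units.ext
      rw [Units.val_pow_eq_pow_val, Units.val_pow_eq_pow_val, hu, h]
    have hm := pow_eq_pow_iff_modEq.mp hpow
    rwa [hou] at hm
  · exact gp_pow_eq p g f β γ hp hpodd hg1 hg2 hfirr hβ hγ a b

lemma cast42_surj :
    Function.Surjective (ZMod.castHom (by norm_num : (2:ℕ) ∣ 4) (ZMod 2)) := by
  intro y
  refine ⟨((y.val : ℕ) : ZMod 4), ?_⟩
  rw [map_natCast]
  exact ZMod.natCast_rightInverse y

lemma ker_cast42 :
    RingHom.ker (ZMod.castHom (by norm_num : (2:ℕ) ∣ 4) (ZMod 2)) = Ideal.span {(2 : ZMod 4)} := by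
  ext z
  rw [RingHom.mem_ker, Ideal.mem_span_singleton]
  constructor
  · intro h
    have hz : z = 0 ∨ z = 2 := by revert h; revert z; decide
    rcases hz with rfl|rfl
    · exact ⟨0, by norm_num⟩
    · exact ⟨1, by norm_num⟩
  · rintro ⟨c, rfl⟩
    rw [map_mul]
    have h2 : (ZMod.castHom (by norm_num : (2:ℕ) ∣ 4) (ZMod 2)) (2 : ZMod 4) = 0 := by decide
    rw [h2, zero_mul]

lemma chi_mk (q : Polynomial (ZMod 4)) :
    chi f (Ideal.Quotient.mk (Ideal.span {f}) q)
      = Ideal.Quotient.mk (Ideal.span {fbar f})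
          (q.map (ZMod.castHom (by norm_num : (2:ℕ) ∣ 4) (ZMod 2))) := rfl

lemma ker_chi (x : GaloisR f) (hx : chi f x = 0) : ∃ y, x = 2 * y := by
  obtain ⟨q, rfl⟩ := Ideal.Quotient.mk_surjective x
  rw [chi_mk p g f β γ hp hpodd hg1 hg2 hfirr hβ hγ] at hx
  rw [Ideal.Quotient.eq_zero_iff_mem, Ideal.mem_span_singleton] at hx
  obtain ⟨b, hb⟩ := hx
  obtain ⟨B, hB⟩ := Polynomial.map_surjective _ (cast42_surj p g f β γ hp hpodd hg1 hg2 hfirr hβ hγ) b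
  have hker : (q - f*B) ∈ RingHom.ker
      (Polynomial.mapRingHom (ZMod.castHom (by norm_num : (2:ℕ) ∣ 4) (ZMod 2))) := by
    rw [RingHom.mem_ker, map_sub, map_mul]
    simp only [Polynomial.coe_mapRingHom]
    rw [hb, hB]
    simp only [fbar]
    ring
  rw [Polynomial.ker_mapRingHom, ker_cast42 p g f β γ hp hpodd hg1 hg2 hfirr hβ hγ, Ideal.map_span, Set.image_singleton,
    Ideal.mem_span_singleton] at hker
  obtain ⟨H, hH⟩ := hker
  refine ⟨Ideal.Quotient.mk _ H, ?_⟩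
  have hq : q = f*B + Polynomial.C (2 : ZMod 4) * H := by
    have : Polynomial.C (2 : ZMod 4) = (fun (a : Polynomial (ZMod 4)) => a) (Polynomial.C 2) := rfl
    linear_combination hH
  rw [hq, map_add, map_mul, map_mul]
  have hf0 : Ideal.Quotient.mk (Ideal.span {f}) f = 0 :=
    Ideal.Quotient.eq_zero_iff_mem.mpr (Ideal.subset_span rfl)
  rw [hf0, zero_mul, zero_add]
  have hC2 : (Ideal.Quotient.mk (Ideal.span {f})) (Polynomial.C (2 : ZMod 4))
      = (2 : GaloisR f) := by
    have h1 : Polynomial.C (2 : ZMod 4) = (2 : Polynomial (ZMod 4)) := by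
      rw [map_ofNat]
    rw [h1, map_ofNat]
  rw [hC2]

lemma fbar_irred : Irreducible (fbar f) := hfirr

lemma Fq_nontrivial : Nontrivial (Fq f) := by
  refine Ideal.Quotient.nontrivial_iff.mpr ?_
  intro htop
  rw [Ideal.span_singleton_eq_top] at htop
  exact (fbar_irred p g f β γ hp hpodd hg1 hg2 hfirr hβ hγ).not_isUnit htop

lemma chi_surj : Function.Surjective (chi f) := by
  intro z
  obtain ⟨qb, rfl⟩ := Ideal.Quotient.mk_surjective z
  obtain ⟨Q, hQ⟩ := Polynomial.map_surjective _ (cast42_surj p g f β γ hp hpodd hg1 hg2 hfirr hβ hγ) qb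
  exact ⟨Ideal.Quotient.mk _ Q, by rw [chi_mk p g f β γ hp hpodd hg1 hg2 hfirr hβ hγ, hQ]⟩

lemma unit_of_chi (x : GaloisR f) (hx : chi f x ≠ 0) : IsUnit x := by
  haveI hmax : (Ideal.span {fbar f}).IsMaximal :=
    PrincipalIdealRing.isMaximal_of_irreducible (fbar_irred p g f β γ hp hpodd hg1 hg2 hfirr hβ hγ)
  letI : Field (Fq f) := Ideal.Quotient.field _
  obtain ⟨y, hy⟩ := chi_surj p g f β γ hp hpodd hg1 hg2 hfirr hβ hγ (chi f x)⁻¹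
  have hxy : chi f (x*y) = 1 := by rw [map_mul, hy, mul_inv_cancel₀ hx]
  have h0 : chi f (x*y - 1) = 0 := by rw [map_sub, hxy, map_one, sub_self]
  obtain ⟨h, hh⟩ := ker_chi p g f β γ hp hpodd hg1 hg2 hfirr hβ hγ _ h0
  have hx4 : (4 : GaloisR f) = 0 := four_zero p g f β γ hp hpodd hg1 hg2 hfirr hβ hγ
  have hmain : x * (y * (1 - 2*h)) = 1 := by
    have hxy2 : x*y = 1 + 2*h := by linear_combination hh
    calc x * (y*(1-2*h)) = (x*y)*(1-2*h) := by ring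
      _ = (1+2*h)*(1-2*h) := by rw [hxy2]
      _ = 1 - 4*(h*h) := by ring
      _ = 1 := by rw [hx4, zero_mul, sub_zero]
  exact ⟨⟨x, y * (1 - 2*h), hmain, by rw [mul_comm]; exact hmain⟩, rfl⟩

lemma Fq_charP : CharP (Fq f) 2 := by
  haveI := Fq_nontrivial p g f β γ hp hpodd hg1 hg2 hfirr hβ hγ
  exact charP_of_injective_algebraMap' (ZMod 2) 2

lemma Fq_two : (2 : Fq f) = 0 := by
  haveI := Fq_charP p g f β γ hp hpodd hg1 hg2 hfirr hβ hγ
  have h := CharP.cast_eq_zero (Fq f) 2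
  exact_mod_cast h

lemma chi_two : chi f (2 : GaloisR f) = 0 := by
  rw [map_ofNat]
  exact Fq_two p g f β γ hp hpodd hg1 hg2 hfirr hβ hγ

lemma bet_ne_one_mod2 : chi f ((β : GaloisR f) - 1) ≠ 0 := by
  intro h0
  obtain ⟨h, hh⟩ := ker_chi p g f β γ hp hpodd hg1 hg2 hfirr hβ hγ _ h0
  have hb : (β : GaloisR f) = 1 + 2*h := by linear_combination hh
  have h4 := four_zero p g f β γ hp hpodd hg1 hg2 hfirr hβ hγ
  have hb2 : (β : GaloisR f)^2 = 1 := by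
    calc (β : GaloisR f)^2 = 1 + 4*(h + h*h) := by rw [hb]; ring
      _ = 1 := by rw [h4, zero_mul, add_zero]
  have hu2 : β^2 = 1 := by
    apply Units.ext
    rw [Units.val_pow_eq_pow_val, hb2, Units.val_one]
  have hdvd := orderOf_dvd_of_pow_eq_one hu2
  rw [hβ] at hdvd
  have := pge3 p g f β γ hp hpodd hg1 hg2 hfirr hβ hγ
  have := Nat.le_of_dvd (by norm_num) hdvd
  omega

lemma geom_bet : ∑ n ∈ Finset.range p, (β : GaloisR f)^n = 0 := by
  have hgeo := geom_sum_mul ((β : GaloisR f)) p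
  rw [bet_pow_p p g f β γ hp hpodd hg1 hg2 hfirr hβ hγ, sub_self] at hgeo
  have hu : IsUnit ((β : GaloisR f) - 1) := unit_of_chi p g f β γ hp hpodd hg1 hg2 hfirr hβ hγ _ (bet_ne_one_mod2 p g f β γ hp hpodd hg1 hg2 hfirr hβ hγ)
  have h2 : ((β : GaloisR f) - 1) * (∑ n ∈ Finset.range p, (β : GaloisR f)^n)
      = ((β : GaloisR f) - 1) * 0 := by
    rw [mul_zero, mul_comm]
    exact hgeo
  exact hu.mul_left_cancel h2

lemma Hs_total : Hs p g f β 0 + Hs p g f β 1 = -1 := by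
  have hp3 := pge3 p g f β γ hp hpodd hg1 hg2 hfirr hβ hγ
  haveI : NeZero p := ⟨by omega⟩
  haveI : Fact p.Prime := ⟨hp⟩
  have hK := p1even p g f β γ hp hpodd hg1 hg2 hfirr hβ hγ
  have h1 : Hs p g f β 0 + Hs p g f β 1
      = ∑ k ∈ Finset.range (2 * Kp p), (β : GaloisR f) ^ (((g : ZMod p)^k).val) := by
    rw [sum_even_odd (fun k => (β : GaloisR f) ^ (((g : ZMod p)^k).val)) (Kp p), Hs, Hs]
    congr 1
  have himg : (Finset.range (p-1)).image (fun k => (g : ZMod p)^k) = Finset.univ.erase 0 := by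
    apply Finset.ext; intro x
    simp only [Finset.mem_image, Finset.mem_range, Finset.mem_erase, Finset.mem_univ, and_true]
    constructor
    · rintro ⟨k, hk, rfl⟩
      exact ((gp_isUnit p g f β γ hp hpodd hg1 hg2 hfirr hβ hγ).pow k).ne_zero
    · intro hx
      obtain ⟨k, hk, hkx⟩ := zmodp_eq_pow p g f β γ hp hpodd hg1 hg2 hfirr hβ hγ x hx
      exact ⟨k, hk, hkx.symm⟩
  have hinj : ∀ a ∈ Finset.range (p-1), ∀ b ∈ Finset.range (p-1),
      (g : ZMod p)^a = (g : ZMod p)^b → a = b := by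
    intro a ha b hb hab
    rw [Finset.mem_range] at ha hb
    have := (gp_pow_iff p g f β γ hp hpodd hg1 hg2 hfirr hβ hγ a b).mp hab
    rw [Nat.mod_eq_of_lt ha, Nat.mod_eq_of_lt hb] at this
    exact this
  have h3 : ∑ x ∈ Finset.univ.erase (0 : ZMod p), (β : GaloisR f) ^ x.val
      = (∑ x : ZMod p, (β : GaloisR f) ^ x.val) - 1 := by
    have hadd := Finset.add_sum_erase Finset.univ
      (fun x : ZMod p => (β : GaloisR f) ^ x.val) (Finset.mem_univ 0)
    simp only [ZMod.val_zero, pow_zero] at hadd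
    linear_combination hadd
  calc Hs p g f β 0 + Hs p g f β 1
      = ∑ k ∈ Finset.range (2 * Kp p), (β : GaloisR f) ^ (((g : ZMod p)^k).val) := h1
    _ = ∑ k ∈ Finset.range (p-1), (β : GaloisR f) ^ (((g : ZMod p)^k).val) := by rw [hK]
    _ = ∑ x ∈ Finset.univ.erase (0 : ZMod p), (β : GaloisR f) ^ x.val := by
        rw [← himg, Finset.sum_image hinj]
    _ = (∑ x : ZMod p, (β : GaloisR f) ^ x.val) - 1 := h3
    _ = (∑ n ∈ Finset.range p, (β : GaloisR f) ^ n) - 1 := by rw [sum_zmod p _]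
    _ = -1 := by rw [geom_bet p g f β γ hp hpodd hg1 hg2 hfirr hβ hγ]; ring

lemma chi_Hs_sq (t : ℕ) (ht : (2 : ZMod p) = (g : ZMod p) ^ t) (m : ℕ) :
    (chi f (Hs p g f β m))^2 = chi f (Hs p g f β (t+m)) := by
  have hp3 := pge3 p g f β γ hp hpodd hg1 hg2 hfirr hβ hγ
  haveI : NeZero p := ⟨by omega⟩
  haveI := Fq_charP p g f β γ hp hpodd hg1 hg2 hfirr hβ hγ
  haveI : Fact (Nat.Prime 2) := ⟨Nat.prime_two⟩
  rw [Hs, Hs, map_sum, sum_pow_char, map_sum]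
  refine Finset.sum_congr rfl fun n _ => ?_
  rw [← map_pow, ← pow_mul]
  congr 1
  rw [mul_comm, bet_pow_nat p g f β γ hp hpodd hg1 hg2 hfirr hβ hγ (2 * (((g : ZMod p)^(2*n+m)).val))]
  have hc : ((2 * (((g : ZMod p)^(2*n+m)).val) : ℕ) : ZMod p)
      = (g : ZMod p)^(2*n+(t+m)) := by
    push_cast
    rw [ZMod.natCast_rightInverse ((g : ZMod p)^(2*n+m)), ht, ← pow_add,
      show t+(2*n+m) = 2*n+(t+m) by ring]
  rw [hc]

lemma t_odd (t : ℕ) (ht : (2 : ZMod p) = (g : ZMod p) ^ t)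
    (h8 : p % 8 = 3 ∨ p % 8 = 5) : t % 2 = 1 := by
  haveI : Fact p.Prime := ⟨hp⟩
  by_contra h
  have hte : t % 2 = 0 := by omega
  have hsq : IsSquare (2 : ZMod p) := by
    refine ⟨(g : ZMod p)^(t/2), ?_⟩
    rw [ht, ← pow_add]
    congr 1
    omega
  rw [ZMod.exists_sq_eq_two_iff (by have := pge3 p g f β γ hp hpodd hg1 hg2 hfirr hβ hγ; omega : p ≠ 2)] at hsq
  omega

lemma t_even (t : ℕ) (ht : (2 : ZMod p) = (g : ZMod p) ^ t)
    (h8 : p % 8 = 1 ∨ p % 8 = 7) : t % 2 = 0 := by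
  haveI : Fact p.Prime := ⟨hp⟩
  have hp3 := pge3 p g f β γ hp hpodd hg1 hg2 hfirr hβ hγ
  have hsq : IsSquare (2 : ZMod p) :=
    (ZMod.exists_sq_eq_two_iff (by omega : p ≠ 2)).mpr h8
  obtain ⟨y, hy⟩ := hsq
  have hy0 : y ≠ 0 := by
    intro h0
    rw [h0, mul_zero] at hy
    have h2 : ((2:ℕ) : ZMod p) = 0 := by exact_mod_cast hy
    rw [ZMod.natCast_eq_zero_iff] at h2
    have := Nat.le_of_dvd (by norm_num) h2
    omega
  obtain ⟨s, hs, hys⟩ := zmodp_eq_pow p g f β γ hp hpodd hg1 hg2 hfirr hβ hγ y hy0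
  have hpow : (g : ZMod p)^t = (g : ZMod p)^(2*s) := by
    rw [← ht, hy, hys, ← pow_add, two_mul]
  have hmod := (gp_pow_iff p g f β γ hp hpodd hg1 hg2 hfirr hβ hγ t (2*s)).mp hpow
  have h2d : (2:ℕ) ∣ (p-1) := by
    obtain ⟨k, hk⟩ := hpodd
    exact ⟨k, by omega⟩
  have e1 := Nat.mod_mod_of_dvd t h2d
  have e2 := Nat.mod_mod_of_dvd (2*s) h2d
  omega

lemma S0val_eq : S0val p g f γ = -(Hs p g f β 0) := by
  have hp3 := pge3 p g f β γ hp hpodd hg1 hg2 hfirr hβ hγ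
  haveI : NeZero (2*p) := ⟨by omega⟩
  haveI : Fact (1 < 2*p) := ⟨by omega⟩
  have h := sum_Dcl p g f β γ hp hpodd hg1 hg2 hfirr hβ hγ 0 0 (by norm_num)
  rw [pow_zero, ZMod.val_one] at h
  simp only [one_mul] at h
  rw [S0val]
  exact h

end Main
end S15

set_option maxHeartbeats 1600000 in
theorem stmt15 (p g r : ℕ) (hp : p.Prime) (hpodd : Odd p)
    (hgodd : Odd g)
    (hg1 : orderOf (g : ZMod p) = p - 1)
    (hg2 : orderOf (g : ZMod (2 * p)) = p - 1)
    (hr : orderOf (2 : ZMod p) = r)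
    (f : Polynomial (ZMod 4)) (hf : f.Monic) (hfdeg : f.natDegree = r)
    (hfirr : Irreducible (f.map (ZMod.castHom (by norm_num : (2:ℕ) ∣ 4) (ZMod 2))))
    (β : (GaloisR f)ˣ) (hβ : orderOf β = p)
    (γ : (GaloisR f)ˣ) (hγ : γ = -β)
    (hunit : IsUnit (S0val p g f γ)) :
    (Polynomial.aeval ((γ : GaloisR f) ^ (0 : ℕ)) (genPoly p g) = (p : GaloisR f) + 1 ∧
     Polynomial.aeval ((γ : GaloisR f) ^ p) (genPoly p g) = 2) ∧
    ((p % 8 = 3 ∨ p % 8 = 5) →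
      ∀ v ∈ Dcl p g 0 ∪ Dcl p g 1 ∪ Ecl p g 0 ∪ Ecl p g 1,
        IsUnit (Polynomial.aeval ((γ : GaloisR f) ^ v.val) (genPoly p g))) ∧
    ((p % 8 = 1 ∨ p % 8 = 7) →
      (∀ v ∈ Dcl p g 0 ∪ Dcl p g 1 ∪ Ecl p g 0,
        Polynomial.aeval ((γ : GaloisR f) ^ v.val) (genPoly p g) = 0) ∧
      (∀ v ∈ Ecl p g 1,
        Polynomial.aeval ((γ : GaloisR f) ^ v.val) (genPoly p g) = 2)) := by
  have hγ' : (γ : GaloisR f) = -(β : GaloisR f) := by rw [hγ, Units.val_neg]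
  clear hγ
  obtain ⟨t2, ht2⟩ := S15.two_eq_pow p g f β γ hp hpodd hg1 hg2 hfirr hβ hγ'
  obtain ⟨a, ha⟩ := hpodd
  have hpodd : Odd p := ⟨a, ha⟩
  have h4 := S15.four_zero p g f β γ hp hpodd hg1 hg2 hfirr hβ hγ'
  have hKp : S15.Kp p = a := by
    have := hp.two_le
    simp only [S15.Kp]; omega
  have hcast : ((p:ℕ) : GaloisR f) = 2*(a : GaloisR f)+1 := by
    rw [ha]; push_cast; ring
  have hsum := S15.Hs_total p g f β γ hp hpodd hg1 hg2 hfirr hβ hγ'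
  refine ⟨⟨?_, ?_⟩, ?_, ?_⟩
  · -- S(1) = p + 1
    rw [S15.eval_gen p g f β γ hp hpodd hg1 hg2 hfirr hβ hγ' 0]
    simp only [Nat.zero_mul, pow_zero, mul_one]
    rw [Finset.sum_const, Finset.sum_const, Finset.sum_const,
      S15.Dcl_card p g f β γ hp hpodd hg1 hg2 hfirr hβ hγ' 1 (by norm_num), S15.Ecl_card p g f β γ hp hpodd hg1 hg2 hfirr hβ hγ' 0 (by norm_num),
      S15.Ecl_card p g f β γ hp hpodd hg1 hg2 hfirr hβ hγ' 1 (by norm_num)]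
    simp only [nsmul_eq_mul, mul_one]
    rw [hKp, hcast]
    linear_combination (a : GaloisR f) * h4
  · -- S(-1) = 2
    rw [S15.eval_gen p g f β γ hp hpodd hg1 hg2 hfirr hβ hγ' p]
    have hgp := S15.gam_pow_p p g f β γ hp hpodd hg1 hg2 hfirr hβ hγ'
    have e1 : ∑ x ∈ Dcl p g 1, (γ : GaloisR f)^(p*x.val)
        = ∑ _x ∈ Dcl p g 1, (-1 : GaloisR f) := by
      refine Finset.sum_congr rfl fun x hx => ?_
      rw [pow_mul, hgp]
      exact Odd.neg_one_pow (α := GaloisR f)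
        (Nat.odd_iff.mpr (S15.isUnit_val_odd p g f β γ hp hpodd hg1 hg2 hfirr hβ hγ' x (S15.Dcl_isUnit p g f β γ hp hpodd hg1 hg2 hfirr hβ hγ' hx)))
    have e2 : ∀ i, ∀ hx : True, ∑ x ∈ Ecl p g i, (γ : GaloisR f)^(p*x.val)
        = ∑ _x ∈ Ecl p g i, (1 : GaloisR f) := by
      intro i _
      refine Finset.sum_congr rfl fun x hx => ?_
      rw [pow_mul, hgp]
      exact Even.neg_one_pow (α := GaloisR f) (Nat.even_iff.mpr (S15.Ecl_val_even p g f β γ hp hpodd hg1 hg2 hfirr hβ hγ' hx))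
    have elast : (γ : GaloisR f)^(p*p) = -1 := by
      rw [pow_mul, hgp]
      exact Odd.neg_one_pow (α := GaloisR f) ⟨a, ha⟩
    rw [e1, e2 0 trivial, e2 1 trivial, elast,
      Finset.sum_const, Finset.sum_const, Finset.sum_const,
      S15.Dcl_card p g f β γ hp hpodd hg1 hg2 hfirr hβ hγ' 1 (by norm_num), S15.Ecl_card p g f β γ hp hpodd hg1 hg2 hfirr hβ hγ' 0 (by norm_num),
      S15.Ecl_card p g f β γ hp hpodd hg1 hg2 hfirr hβ hγ' 1 (by norm_num)]
    simp only [nsmul_eq_mul, mul_one, mul_neg_one]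
    rw [hKp]
    linear_combination ((a : GaloisR f) - 1) * h4
  · -- p ≡ ±3 mod 8 : units
    intro h8 v hv
    have hto := S15.t_odd p g f β γ hp hpodd hg1 hg2 hfirr hβ hγ' t2 ht2 h8
    haveI := S15.Fq_nontrivial p g f β γ hp hpodd hg1 hg2 hfirr hβ hγ'
    have hDcase : ∀ k : ℕ, ((k+1) % 2 = 1 → (t2+k+0) % 2 = 1 → (t2+k+1) % 2 = 0 →
        IsUnit (Polynomial.aeval ((γ : GaloisR f) ^ (((g : ZMod (2*p))^k).val)) (genPoly p g)))
        ∧ ((k+1) % 2 = 0 → (t2+k+0) % 2 = 0 → (t2+k+1) % 2 = 1 →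
        IsUnit (Polynomial.aeval ((γ : GaloisR f) ^ (((g : ZMod (2*p))^k).val)) (genPoly p g))) := by
      intro k
      have hlast : (γ : GaloisR f)^((((g : ZMod (2*p))^k).val) * p) = -1 := by
        rw [mul_comm, pow_mul, S15.gam_pow_p p g f β γ hp hpodd hg1 hg2 hfirr hβ hγ']
        exact Odd.neg_one_pow (α := GaloisR f)
          (Nat.odd_iff.mpr (S15.isUnit_val_odd p g f β γ hp hpodd hg1 hg2 hfirr hβ hγ' _ ((S15.gg_isUnit p g f β γ hp hpodd hg1 hg2 hfirr hβ hγ').pow _)))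
      constructor <;> intro hm1 hm2 hm3 <;>
        rw [S15.eval_gen p g f β γ hp hpodd hg1 hg2 hfirr hβ hγ' (((g : ZMod (2*p))^k).val),
          S15.sum_Dcl p g f β γ hp hpodd hg1 hg2 hfirr hβ hγ' k 1 (by norm_num),
          S15.sum_Ecl p g f β γ hp hpodd hg1 hg2 hfirr hβ hγ' k 0 (by norm_num) t2 ht2,
          S15.sum_Ecl p g f β γ hp hpodd hg1 hg2 hfirr hβ hγ' k 1 (by norm_num) t2 ht2, hlast,
          S15.Hs_mod p g f β γ hp hpodd hg1 hg2 hfirr hβ hγ' (k+1), S15.Hs_mod p g f β γ hp hpodd hg1 hg2 hfirr hβ hγ' (t2+k+0), S15.Hs_mod p g f β γ hp hpodd hg1 hg2 hfirr hβ hγ' (t2+k+1),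
          hm1, hm2, hm3] <;>
        apply S15.unit_of_chi p g f β γ hp hpodd hg1 hg2 hfirr hβ hγ'
      · have hX : -(S15.Hs p g f β 1) + 2*(S15.Hs p g f β 1) + 3*(S15.Hs p g f β 0) + 2*(-1)
            = (S15.Hs p g f β 0 + S15.Hs p g f β 1) + 2*(S15.Hs p g f β 0 - 1) := by ring
        rw [hX, hsum, map_add, map_mul, S15.chi_two p g f β γ hp hpodd hg1 hg2 hfirr hβ hγ', zero_mul, add_zero, map_neg, map_one]
        intro hcontra
        exact one_ne_zero (neg_eq_zero.mp hcontra)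
      · have hX : -(S15.Hs p g f β 0) + 2*(S15.Hs p g f β 0) + 3*(S15.Hs p g f β 1) + 2*(-1)
            = (S15.Hs p g f β 0 + S15.Hs p g f β 1) + 2*(S15.Hs p g f β 1 - 1) := by ring
        rw [hX, hsum, map_add, map_mul, S15.chi_two p g f β γ hp hpodd hg1 hg2 hfirr hβ hγ', zero_mul, add_zero, map_neg, map_one]
        intro hcontra
        exact one_ne_zero (neg_eq_zero.mp hcontra)
    have hEcase : ∀ k : ℕ,
        IsUnit (Polynomial.aeval ((γ : GaloisR f) ^ ((2 * (g : ZMod (2*p))^k).val)) (genPoly p g)) := by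
      intro k
      have hlast : (γ : GaloisR f)^(((2 * (g : ZMod (2*p))^k).val) * p) = 1 := by
        rw [mul_comm, pow_mul, S15.gam_pow_p p g f β γ hp hpodd hg1 hg2 hfirr hβ hγ']
        exact Even.neg_one_pow (α := GaloisR f) (Nat.even_iff.mpr (by rw [S15.val_two_mul p g f β γ hp hpodd hg1 hg2 hfirr hβ hγ']; omega))
      rw [S15.eval_gen p g f β γ hp hpodd hg1 hg2 hfirr hβ hγ' ((2 * (g : ZMod (2*p))^k).val),
        S15.sum_Dcl2 p g f β γ hp hpodd hg1 hg2 hfirr hβ hγ' k 1 (by norm_num) t2 ht2,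
        S15.sum_Ecl2 p g f β γ hp hpodd hg1 hg2 hfirr hβ hγ' k 0 (by norm_num) t2 ht2,
        S15.sum_Ecl2 p g f β γ hp hpodd hg1 hg2 hfirr hβ hγ' k 1 (by norm_num) t2 ht2, hlast,
        S15.Hs_mod p g f β γ hp hpodd hg1 hg2 hfirr hβ hγ' (t2+k+1), S15.Hs_mod p g f β γ hp hpodd hg1 hg2 hfirr hβ hγ' (2*t2+k+0), S15.Hs_mod p g f β γ hp hpodd hg1 hg2 hfirr hβ hγ' (2*t2+k+1)]
      have hval : (S15.Hs p g f β ((t2+k+1) % 2) + 2*(S15.Hs p g f β ((2*t2+k+0) % 2))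
          + 3*(S15.Hs p g f β ((2*t2+k+1) % 2)) + 2*1) = -1 := by
        rcases Nat.even_or_odd k with ⟨m, hk⟩|⟨m, hk⟩
        · rw [show (t2+k+1) % 2 = 0 by omega, show (2*t2+k+0) % 2 = 0 by omega,
            show (2*t2+k+1) % 2 = 1 by omega]
          have hX : S15.Hs p g f β 0 + 2*(S15.Hs p g f β 0) + 3*(S15.Hs p g f β 1) + 2*1
              = 3*(S15.Hs p g f β 0 + S15.Hs p g f β 1) + 2 := by ring
          rw [hX, hsum]; norm_num
        · rw [show (t2+k+1) % 2 = 1 by omega, show (2*t2+k+0) % 2 = 1 by omega,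
            show (2*t2+k+1) % 2 = 0 by omega]
          have hX : S15.Hs p g f β 1 + 2*(S15.Hs p g f β 1) + 3*(S15.Hs p g f β 0) + 2*1
              = 3*(S15.Hs p g f β 0 + S15.Hs p g f β 1) + 2 := by ring
          rw [hX, hsum]; norm_num
      rw [hval]
      exact (isUnit_one (M := GaloisR f)).neg
    rcases Finset.mem_union.mp hv with hv1|hvE1
    · rcases Finset.mem_union.mp hv1 with hv2|hvE0
      · rcases Finset.mem_union.mp hv2 with hvD0|hvD1
        · obtain ⟨q, hq, rfl⟩ := (S15.mem_Dcl_iff p g f β γ hp hpodd hg1 hg2 hfirr hβ hγ').mp hvD0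
          exact (hDcase (2*q+0)).1 (by omega) (by omega) (by omega)
        · obtain ⟨q, hq, rfl⟩ := (S15.mem_Dcl_iff p g f β γ hp hpodd hg1 hg2 hfirr hβ hγ').mp hvD1
          exact (hDcase (2*q+1)).2 (by omega) (by omega) (by omega)
      · obtain ⟨w, hw, rfl⟩ := (S15.mem_Ecl_iff p g f β γ hp hpodd hg1 hg2 hfirr hβ hγ').mp hvE0
        obtain ⟨q, hq, rfl⟩ := (S15.mem_Dcl_iff p g f β γ hp hpodd hg1 hg2 hfirr hβ hγ').mp hw
        exact hEcase (2*q+0)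
    · obtain ⟨w, hw, rfl⟩ := (S15.mem_Ecl_iff p g f β γ hp hpodd hg1 hg2 hfirr hβ hγ').mp hvE1
      obtain ⟨q, hq, rfl⟩ := (S15.mem_Dcl_iff p g f β γ hp hpodd hg1 hg2 hfirr hβ hγ').mp hw
      exact hEcase (2*q+1)
  · -- p ≡ ±1 mod 8
    intro h8
    have hte := S15.t_even p g f β γ hp hpodd hg1 hg2 hfirr hβ hγ' t2 ht2 h8
    have hH0 : IsUnit (S15.Hs p g f β 0) := by
      have hS0 := S15.S0val_eq p g f β γ hp hpodd hg1 hg2 hfirr hβ hγ'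
      rw [hS0] at hunit
      have hneg := hunit.neg
      rwa [neg_neg] at hneg
    have hfrob0 := S15.chi_Hs_sq p g f β γ hp hpodd hg1 hg2 hfirr hβ hγ' t2 ht2 0
    have hmodH : S15.Hs p g f β (t2+0) = S15.Hs p g f β 0 := by
      rw [S15.Hs_mod p g f β γ hp hpodd hg1 hg2 hfirr hβ hγ' (t2+0), show (t2+0) % 2 = 0 by omega]
    rw [hmodH] at hfrob0
    have h2Fq := S15.Fq_two p g f β γ hp hpodd hg1 hg2 hfirr hβ hγ'
    have hchisum : S15.chi f (S15.Hs p g f β 0) + S15.chi f (S15.Hs p g f β 1) = 1 := by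
      have hca := congrArg (S15.chi f) hsum
      rw [map_add, map_neg, map_one] at hca
      linear_combination hca - h2Fq
    have hprod : S15.chi f (S15.Hs p g f β 0 * S15.Hs p g f β 1) = 0 := by
      rw [map_mul]
      have hX : S15.chi f (S15.Hs p g f β 1) = 1 - S15.chi f (S15.Hs p g f β 0) := by
        linear_combination hchisum
      rw [hX]
      linear_combination (-1 : S15.Fq f) * hfrob0
    obtain ⟨hh, hhh⟩ := S15.ker_chi p g f β γ hp hpodd hg1 hg2 hfirr hβ hγ' _ hprod
    have h2H1 : 2 * S15.Hs p g f β 1 = 0 := by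
      obtain ⟨u, hu⟩ := hH0
      have huinv : (↑u⁻¹ : GaloisR f) * ↑u = 1 := u.inv_mul
      have hH1 : S15.Hs p g f β 1 = (↑u⁻¹ : GaloisR f) * (2*hh) := by
        calc S15.Hs p g f β 1 = ((↑u⁻¹ : GaloisR f) * ↑u) * S15.Hs p g f β 1 := by
              rw [huinv, one_mul]
          _ = (↑u⁻¹ : GaloisR f) * (S15.Hs p g f β 0 * S15.Hs p g f β 1) := by
              rw [hu]; ring
          _ = (↑u⁻¹ : GaloisR f) * (2*hh) := by rw [hhh]
      calc 2 * S15.Hs p g f β 1 = 4 * ((↑u⁻¹ : GaloisR f) * hh) := by rw [hH1]; ring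
        _ = 0 := by rw [h4, zero_mul]
    have h2H0 : 2 * S15.Hs p g f β 0 = -2 := by
      have hX : 2*(S15.Hs p g f β 0 + S15.Hs p g f β 1) = -2 := by rw [hsum]; ring
      linear_combination hX - h2H1
    have hDcase : ∀ k : ℕ, ((k+1) % 2 = 1 → (t2+k+0) % 2 = 0 → (t2+k+1) % 2 = 1 →
        Polynomial.aeval ((γ : GaloisR f) ^ (((g : ZMod (2*p))^k).val)) (genPoly p g) = 0)
        ∧ ((k+1) % 2 = 0 → (t2+k+0) % 2 = 1 → (t2+k+1) % 2 = 0 →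
        Polynomial.aeval ((γ : GaloisR f) ^ (((g : ZMod (2*p))^k).val)) (genPoly p g) = 0) := by
      intro k
      have hlast : (γ : GaloisR f)^((((g : ZMod (2*p))^k).val) * p) = -1 := by
        rw [mul_comm, pow_mul, S15.gam_pow_p p g f β γ hp hpodd hg1 hg2 hfirr hβ hγ']
        exact Odd.neg_one_pow (α := GaloisR f)
          (Nat.odd_iff.mpr (S15.isUnit_val_odd p g f β γ hp hpodd hg1 hg2 hfirr hβ hγ' _ ((S15.gg_isUnit p g f β γ hp hpodd hg1 hg2 hfirr hβ hγ').pow _)))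
      constructor <;> intro hm1 hm2 hm3 <;>
        rw [S15.eval_gen p g f β γ hp hpodd hg1 hg2 hfirr hβ hγ' (((g : ZMod (2*p))^k).val),
          S15.sum_Dcl p g f β γ hp hpodd hg1 hg2 hfirr hβ hγ' k 1 (by norm_num),
          S15.sum_Ecl p g f β γ hp hpodd hg1 hg2 hfirr hβ hγ' k 0 (by norm_num) t2 ht2,
          S15.sum_Ecl p g f β γ hp hpodd hg1 hg2 hfirr hβ hγ' k 1 (by norm_num) t2 ht2, hlast,
          S15.Hs_mod p g f β γ hp hpodd hg1 hg2 hfirr hβ hγ' (k+1), S15.Hs_mod p g f β γ hp hpodd hg1 hg2 hfirr hβ hγ' (t2+k+0), S15.Hs_mod p g f β γ hp hpodd hg1 hg2 hfirr hβ hγ' (t2+k+1),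
          hm1, hm2, hm3]
      · have hX : -(S15.Hs p g f β 1) + 2*(S15.Hs p g f β 0) + 3*(S15.Hs p g f β 1) + 2*(-1)
            = 2*(S15.Hs p g f β 0 + S15.Hs p g f β 1) - 2 := by ring
        rw [hX, hsum]
        linear_combination -h4
      · have hX : -(S15.Hs p g f β 0) + 2*(S15.Hs p g f β 1) + 3*(S15.Hs p g f β 0) + 2*(-1)
            = 2*(S15.Hs p g f β 0 + S15.Hs p g f β 1) - 2 := by ring
        rw [hX, hsum]
        linear_combination -h4
    constructor
    · intro v hv
      rcases Finset.mem_union.mp hv with hv1|hvE0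
      · rcases Finset.mem_union.mp hv1 with hvD0|hvD1
        · obtain ⟨q, hq, rfl⟩ := (S15.mem_Dcl_iff p g f β γ hp hpodd hg1 hg2 hfirr hβ hγ').mp hvD0
          exact (hDcase (2*q+0)).1 (by omega) (by omega) (by omega)
        · obtain ⟨q, hq, rfl⟩ := (S15.mem_Dcl_iff p g f β γ hp hpodd hg1 hg2 hfirr hβ hγ').mp hvD1
          exact (hDcase (2*q+1)).2 (by omega) (by omega) (by omega)
      · obtain ⟨w, hw, rfl⟩ := (S15.mem_Ecl_iff p g f β γ hp hpodd hg1 hg2 hfirr hβ hγ').mp hvE0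
        obtain ⟨q, hq, rfl⟩ := (S15.mem_Dcl_iff p g f β γ hp hpodd hg1 hg2 hfirr hβ hγ').mp hw
        have hlast : (γ : GaloisR f)^(((2 * (g : ZMod (2*p))^(2*q+0)).val) * p) = 1 := by
          rw [mul_comm, pow_mul, S15.gam_pow_p p g f β γ hp hpodd hg1 hg2 hfirr hβ hγ']
          exact Even.neg_one_pow (α := GaloisR f) (Nat.even_iff.mpr (by rw [S15.val_two_mul p g f β γ hp hpodd hg1 hg2 hfirr hβ hγ']; omega))
        rw [S15.eval_gen p g f β γ hp hpodd hg1 hg2 hfirr hβ hγ' ((2 * (g : ZMod (2*p))^(2*q+0)).val),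
          S15.sum_Dcl2 p g f β γ hp hpodd hg1 hg2 hfirr hβ hγ' (2*q+0) 1 (by norm_num) t2 ht2,
          S15.sum_Ecl2 p g f β γ hp hpodd hg1 hg2 hfirr hβ hγ' (2*q+0) 0 (by norm_num) t2 ht2,
          S15.sum_Ecl2 p g f β γ hp hpodd hg1 hg2 hfirr hβ hγ' (2*q+0) 1 (by norm_num) t2 ht2, hlast,
          S15.Hs_mod p g f β γ hp hpodd hg1 hg2 hfirr hβ hγ' (t2+(2*q+0)+1), S15.Hs_mod p g f β γ hp hpodd hg1 hg2 hfirr hβ hγ' (2*t2+(2*q+0)+0),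
          S15.Hs_mod p g f β γ hp hpodd hg1 hg2 hfirr hβ hγ' (2*t2+(2*q+0)+1),
          show (t2+(2*q+0)+1) % 2 = 1 by omega, show (2*t2+(2*q+0)+0) % 2 = 0 by omega,
          show (2*t2+(2*q+0)+1) % 2 = 1 by omega]
        have hX : S15.Hs p g f β 1 + 2*(S15.Hs p g f β 0) + 3*(S15.Hs p g f β 1) + 2*1
            = 2*(2*(S15.Hs p g f β 1)) + (2*(S15.Hs p g f β 0)) + 2 := by ring
        rw [hX, h2H1, h2H0]
        norm_num
    · intro v hv
      obtain ⟨w, hw, rfl⟩ := (S15.mem_Ecl_iff p g f β γ hp hpodd hg1 hg2 hfirr hβ hγ').mp hv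
      obtain ⟨q, hq, rfl⟩ := (S15.mem_Dcl_iff p g f β γ hp hpodd hg1 hg2 hfirr hβ hγ').mp hw
      have hlast : (γ : GaloisR f)^(((2 * (g : ZMod (2*p))^(2*q+1)).val) * p) = 1 := by
        rw [mul_comm, pow_mul, S15.gam_pow_p p g f β γ hp hpodd hg1 hg2 hfirr hβ hγ']
        exact Even.neg_one_pow (α := GaloisR f) (Nat.even_iff.mpr (by rw [S15.val_two_mul p g f β γ hp hpodd hg1 hg2 hfirr hβ hγ']; omega))
      rw [S15.eval_gen p g f β γ hp hpodd hg1 hg2 hfirr hβ hγ' ((2 * (g : ZMod (2*p))^(2*q+1)).val),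
        S15.sum_Dcl2 p g f β γ hp hpodd hg1 hg2 hfirr hβ hγ' (2*q+1) 1 (by norm_num) t2 ht2,
        S15.sum_Ecl2 p g f β γ hp hpodd hg1 hg2 hfirr hβ hγ' (2*q+1) 0 (by norm_num) t2 ht2,
        S15.sum_Ecl2 p g f β γ hp hpodd hg1 hg2 hfirr hβ hγ' (2*q+1) 1 (by norm_num) t2 ht2, hlast,
        S15.Hs_mod p g f β γ hp hpodd hg1 hg2 hfirr hβ hγ' (t2+(2*q+1)+1), S15.Hs_mod p g f β γ hp hpodd hg1 hg2 hfirr hβ hγ' (2*t2+(2*q+1)+0),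
        S15.Hs_mod p g f β γ hp hpodd hg1 hg2 hfirr hβ hγ' (2*t2+(2*q+1)+1),
        show (t2+(2*q+1)+1) % 2 = 0 by omega, show (2*t2+(2*q+1)+0) % 2 = 1 by omega,
        show (2*t2+(2*q+1)+1) % 2 = 0 by omega]
      have hX : S15.Hs p g f β 0 + 2*(S15.Hs p g f β 1) + 3*(S15.Hs p g f β 0) + 2*1
          = 2*(2*(S15.Hs p g f β 0)) + 2*(S15.Hs p g f β 1) + 2 := by ring
      rw [hX, h2H1, h2H0]
      linear_combination -h4
end

section
/- Assume p ≡ ±1 (mod 8). Then for j = 0, 1, every coefficient of the polynomials Γ_j(X) = Π_{v ∈ D_j} (X - γ^v) and Λ_j(X) = Π_{v ∈ E_j} (X - γ^v) in R[X] lies in the image of the canonical ring map Z_4 → R; that is, Γ_j and Λ_j are polynomials over Z_4. -/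
open Polynomial

/-- `Γ_j(X) = Π_{v ∈ D_j} (X - γ^v)` in `R[X]`. -/
noncomputable def GammaP (p g : ℕ) (f : Polynomial (ZMod 4)) (γ : (GaloisR f)ˣ) (j : ℕ) :
    Polynomial (GaloisR f) :=
  ∏ v ∈ Dcl p g j, (Polynomial.X - Polynomial.C ((γ : GaloisR f) ^ v.val))

/-- `Λ_j(X) = Π_{v ∈ E_j} (X - γ^v)` in `R[X]`. -/
noncomputable def LambdaP (p g : ℕ) (f : Polynomial (ZMod 4)) (γ : (GaloisR f)ˣ) (j : ℕ) :
    Polynomial (GaloisR f) :=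
  ∏ v ∈ Ecl p g j, (Polynomial.X - Polynomial.C ((γ : GaloisR f) ^ v.val))

namespace Stmt16

noncomputable def c42 : ZMod 4 →+* ZMod 2 := ZMod.castHom (show (2:ℕ) ∣ 4 by norm_num) (ZMod 2)

lemma c42_natCast (n : ℕ) : c42 (n : ZMod 4) = (n : ZMod 2) := map_natCast _ n

lemma c42_surj : Function.Surjective c42 := by
  intro b
  refine ⟨(b.val : ZMod 4), ?_⟩
  rw [c42_natCast]
  simp [ZMod.natCast_val, ZMod.cast_id]

noncomputable def FB (f : Polynomial (ZMod 4)) : Polynomial (ZMod 2) := f.map c42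

/-- reduction mod 2 from the Galois ring to the residue field -/
noncomputable def piR (f : Polynomial (ZMod 4)) : GaloisR f →+* AdjoinRoot (FB f) :=
  Ideal.Quotient.lift _ ((AdjoinRoot.mk (FB f)).comp (Polynomial.mapRingHom c42)) (by
    intro a ha
    rw [Ideal.mem_span_singleton] at ha
    obtain ⟨b, rfl⟩ := ha
    simp only [RingHom.comp_apply, Polynomial.coe_mapRingHom, Polynomial.map_mul]
    exact AdjoinRoot.mk_eq_zero.mpr ⟨_, rfl⟩)

lemma piR_mk (f : Polynomial (ZMod 4)) (q : Polynomial (ZMod 4)) :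
    piR f (AdjoinRoot.mk f q) = AdjoinRoot.mk (FB f) (q.map c42) := rfl

lemma piR_surj (f : Polynomial (ZMod 4)) : Function.Surjective (piR f) := by
  intro z
  induction z using AdjoinRoot.induction_on with
  | ih q =>
    obtain ⟨q', hq'⟩ := Polynomial.map_surjective c42 c42_surj q
    exact ⟨AdjoinRoot.mk f q', by rw [piR_mk, hq']⟩

lemma exists_half {c : ZMod 4} (h : c42 c = 0) : ∃ d, c = 2 * d := by
  have hc : ((c.val : ℕ) : ZMod 4) = c := by simp [ZMod.natCast_val, ZMod.cast_id]
  have h2 : ((c.val : ℕ) : ZMod 2) = 0 := by rw [← c42_natCast, hc]; exact h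
  obtain ⟨k, hk⟩ := (ZMod.natCast_eq_zero_iff _ _).mp h2
  refine ⟨(k : ZMod 4), ?_⟩
  rw [← hc, hk]
  push_cast
  ring

lemma exists_half' {c : ZMod 4} (h : 2 * c = 0) : ∃ d, c = 2 * d := by revert h; revert c; decide

lemma ker_piR {f : Polynomial (ZMod 4)} {z : GaloisR f} (h : piR f z = 0) :
    ∃ w : GaloisR f, z = 2 * w := by
  induction z using AdjoinRoot.induction_on with
  | ih q =>
    rw [piR_mk, AdjoinRoot.mk_eq_zero] at h
    obtain ⟨b, hb⟩ := h
    obtain ⟨b', hb'⟩ := Polynomial.map_surjective c42 c42_surj b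
    have hcoeff : ∀ n, c42 ((q - f * b').coeff n) = 0 := by
      have hz : (q - f * b').map c42 = 0 := by
        rw [Polynomial.map_sub, Polynomial.map_mul, hb']
        rw [show f.map c42 = FB f from rfl, ← hb, sub_self]
      intro n
      have := congrArg (fun P => Polynomial.coeff P n) hz
      simpa only [Polynomial.coeff_map, Polynomial.coeff_zero] using this
    set q' := q - f * b' with hq'
    have hex : ∃ h : Polynomial (ZMod 4), q' = 2 * h := by
      refine ⟨q'.sum fun n c => Polynomial.C (if c = 2 then 1 else 0) * Polynomial.X ^ n, ?_⟩
      rw [Polynomial.sum_def, Finset.mul_sum]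
      conv_lhs => rw [← Polynomial.sum_C_mul_X_pow_eq q', Polynomial.sum_def]
      refine Finset.sum_congr rfl fun n _ => ?_
      have h2 : 2 * (if q'.coeff n = 2 then (1:ZMod 4) else 0) = q'.coeff n := by
        have := hcoeff n
        revert this
        generalize q'.coeff n = c
        revert c; decide
      conv_lhs => rw [← h2]
      rw [Polynomial.C_mul, map_ofNat]
      ring
    obtain ⟨h, hh⟩ := hex
    refine ⟨AdjoinRoot.mk f h, ?_⟩
    have : q = f * b' + 2 * h := by rw [← hh, hq']; ring
    rw [this]
    simp only [map_add, map_mul, AdjoinRoot.mk_self, zero_mul, zero_add]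
    rw [map_ofNat]
    exact rfl

noncomputable def i0 (f : Polynomial (ZMod 4)) : ZMod 4 →+* AdjoinRoot (FB f) :=
  (algebraMap (ZMod 2) (AdjoinRoot (FB f))).comp c42

section Frob
variable {f : Polynomial (ZMod 4)} (hirr : Irreducible (FB f))

lemma charP2 (hirr : Irreducible (FB f)) : CharP (AdjoinRoot (FB f)) 2 := by
  haveI : Fact (Irreducible (FB f)) := ⟨hirr⟩
  exact charP_of_injective_algebraMap (algebraMap (ZMod 2) (AdjoinRoot (FB f))).injective 2

lemma sq_eval₂ (hirr : Irreducible (FB f)) (b : AdjoinRoot (FB f)) (q : Polynomial (ZMod 4)) :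
    (Polynomial.eval₂ (i0 f) b q) ^ 2 = Polynomial.eval₂ (i0 f) (b ^ 2) q := by
  haveI : Fact (Irreducible (FB f)) := ⟨hirr⟩
  haveI : CharP (AdjoinRoot (FB f)) 2 := charP2 hirr
  haveI : ExpChar (AdjoinRoot (FB f)) 2 := ExpChar.prime Nat.prime_two
  have hfr : (frobenius (AdjoinRoot (FB f)) 2).comp (i0 f) = i0 f := by
    apply RingHom.ext
    intro c
    simp only [RingHom.comp_apply, frobenius_def, i0]
    rw [← map_pow]
    congr 1
    generalize c42 c = d
    revert d; decide
  calc (Polynomial.eval₂ (i0 f) b q)^2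
      = frobenius (AdjoinRoot (FB f)) 2 (Polynomial.eval₂ (i0 f) b q) := (frobenius_def _ _).symm
    _ = Polynomial.eval₂ ((frobenius (AdjoinRoot (FB f)) 2).comp (i0 f))
          (frobenius (AdjoinRoot (FB f)) 2 b) q := Polynomial.hom_eval₂ _ _ _ _
    _ = Polynomial.eval₂ (i0 f) (b^2) q := by rw [hfr, frobenius_def]

lemma sq_aeval2 (hirr : Irreducible (FB f)) (b : AdjoinRoot (FB f)) (q : Polynomial (ZMod 2)) :
    (Polynomial.aeval b q) ^ 2 = Polynomial.aeval (b ^ 2) q := by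
  haveI : Fact (Irreducible (FB f)) := ⟨hirr⟩
  haveI : CharP (AdjoinRoot (FB f)) 2 := charP2 hirr
  haveI : ExpChar (AdjoinRoot (FB f)) 2 := ExpChar.prime Nat.prime_two
  have hfr : (frobenius (AdjoinRoot (FB f)) 2).comp (algebraMap (ZMod 2) _) =
      algebraMap (ZMod 2) _ := by
    apply RingHom.ext
    intro c
    simp only [RingHom.comp_apply, frobenius_def]
    rw [← map_pow]
    congr 1
    revert c; decide
  calc (Polynomial.aeval b q)^2
      = frobenius (AdjoinRoot (FB f)) 2 (Polynomial.eval₂ (algebraMap (ZMod 2) _) b q) :=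
        (frobenius_def _ _).symm
    _ = Polynomial.eval₂ ((frobenius (AdjoinRoot (FB f)) 2).comp (algebraMap (ZMod 2) _))
          (frobenius (AdjoinRoot (FB f)) 2 b) q := Polynomial.hom_eval₂ _ _ _ _
    _ = Polynomial.aeval (b^2) q := by rw [hfr, frobenius_def]; rfl

end Frob

lemma four_eq_zero (f : Polynomial (ZMod 4)) : (4 : GaloisR f) = 0 := by
  have : (4 : GaloisR f) = algebraMap (ZMod 4) (GaloisR f) 4 := (map_ofNat _ 4).symm
  rw [this, show (4 : ZMod 4) = 0 by decide, map_zero]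

lemma half_add_half {c : ZMod 4} (h : 2 * c = 0) :
    (if c = 2 then (1 : ZMod 4) else 0) + (if c = 2 then (1:ZMod 4) else 0) = c := by
  revert h; revert c; decide

lemma two_mul_eq_zero {f : Polynomial (ZMod 4)} (hf : f.Monic) {z : GaloisR f}
    (h : 2 * z = 0) : ∃ w, z = 2 * w := by
  classical
  revert z
  show ∀ z : AdjoinRoot f, 2 * z = 0 → ∃ w : AdjoinRoot f, z = 2 * w
  intro z h
  set pb := AdjoinRoot.powerBasis' hf with hpb
  set B := pb.basis with hB
  set cz := B.repr z with hcz
  have hco : ∀ i, 2 * cz i = 0 := by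
    intro i
    have h1 : z + z = 0 := by rw [← two_mul, h]
    have h2 := congrArg (fun t => (B.repr t) i) h1
    simp only [map_add, Finsupp.add_apply, map_zero, Finsupp.coe_zero, Pi.zero_apply] at h2
    rw [two_mul]
    exact h2
  set dz : (Fin pb.dim) →₀ ZMod 4 := cz.mapRange (fun c => if c = 2 then 1 else 0) (by decide) with hdz
  have hsum : cz = dz + dz := by
    ext i
    rw [Finsupp.add_apply, hdz, Finsupp.mapRange_apply]
    exact (half_add_half (hco i)).symm
  refine ⟨B.repr.symm dz, ?_⟩
  have : z = B.repr.symm cz := by rw [hcz, LinearEquiv.symm_apply_apply]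
  rw [this, hsum, map_add, two_mul]

lemma piR_mk' (f : Polynomial (ZMod 4)) (q : Polynomial (ZMod 4)) :
    piR f (AdjoinRoot.mk f q) = Polynomial.eval₂ (i0 f) (AdjoinRoot.root (FB f)) q := by
  rw [piR_mk, ← AdjoinRoot.aeval_eq, Polynomial.aeval_def, Polynomial.eval₂_map]
  rfl

lemma piR_algebraMap (f : Polynomial (ZMod 4)) (a : ZMod 4) :
    piR f (algebraMap (ZMod 4) (GaloisR f) a) = i0 f a := by
  have h1 : algebraMap (ZMod 4) (GaloisR f) a = AdjoinRoot.mk f (Polynomial.C a) := rfl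
  rw [h1, piR_mk', Polynomial.eval₂_C]

lemma piR_aeval (f : Polynomial (ZMod 4)) (z : GaloisR f) (q : Polynomial (ZMod 4)) :
    piR f (Polynomial.aeval z q) = Polynomial.eval₂ (i0 f) (piR f z) q := by
  rw [Polynomial.aeval_def, Polynomial.hom_eval₂]
  congr 1
  apply RingHom.ext
  intro a
  rw [RingHom.comp_apply]
  exact piR_algebraMap f a

lemma piR_two (f : Polynomial (ZMod 4)) (hirr : Irreducible (FB f)) : (piR f) 2 = 0 := by
  haveI := charP2 hirr
  rw [map_ofNat]
  exact CharTwo.two_eq_zero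

lemma isUnit_of_piR {f : Polynomial (ZMod 4)} {z : GaloisR f} (hz : IsUnit (piR f z)) :
    IsUnit z := by
  obtain ⟨v, hv⟩ : ∃ v, piR f z * v = 1 := ⟨↑hz.unit⁻¹, hz.unit.mul_inv⟩
  obtain ⟨z', hz'⟩ := piR_surj f v
  have h0 : piR f (z * z' - 1) = 0 := by rw [map_sub, map_mul, hz', map_one, hv, sub_self]
  obtain ⟨m, hm⟩ := ker_piR h0
  have hzz' : z * z' = 1 + 2 * m := by rw [← hm]; ring
  refine IsUnit.of_mul_eq_one (a := z) (z' * (1 + 2 * m)) ?_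
  have h4 := four_eq_zero f
  calc z * (z' * (1 + 2*m)) = (z * z') * (1 + 2*m) := by ring
    _ = (1 + 2*m) * (1 + 2*m) := by rw [hzz']
    _ = 1 := by linear_combination (m + m*m) * h4

lemma algebraMap_mkC (f : Polynomial (ZMod 4)) (a : ZMod 4) :
    algebraMap (ZMod 4) (GaloisR f) a = AdjoinRoot.mk f (Polynomial.C a) := rfl

lemma aeval_rootG (f : Polynomial (ZMod 4)) (q : Polynomial (ZMod 4)) :
    Polynomial.aeval (R := ZMod 4) (A := GaloisR f) (AdjoinRoot.root f) q = AdjoinRoot.mk f q :=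
  AdjoinRoot.aeval_eq q

lemma exists_frobenius {f : Polynomial (ZMod 4)} (hf : f.Monic) (hirr : Irreducible (FB f)) :
    ∃ φ : GaloisR f →+* GaloisR f,
      (∀ z, piR f (φ z) = piR f z ^ 2) ∧
      (∀ c : GaloisR f, φ c = c → c ∈ Set.range (algebraMap (ZMod 4) (GaloisR f))) := by
  haveI : Fact (Irreducible (FB f)) := ⟨hirr⟩
  set x : GaloisR f := AdjoinRoot.root f with hx
  set ρ : AdjoinRoot (FB f) := AdjoinRoot.root (FB f) with hρ
  have h4 := four_eq_zero f
  have hπx : piR f x = ρ := by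
    rw [hx, show AdjoinRoot.root f = AdjoinRoot.mk f Polynomial.X from rfl, piR_mk',
      Polynomial.eval₂_X]
  -- the element A0 = f(x²) is divisible by 2
  have hπA0 : piR f (Polynomial.aeval (x^2) f) = 0 := by
    rw [piR_aeval, map_pow, hπx, ← sq_eval₂ hirr]
    have h7 : Polynomial.eval₂ (i0 f) ρ f = piR f (Polynomial.aeval x f) := by
      rw [piR_aeval, hπx]
    rw [h7, hx, aeval_rootG, AdjoinRoot.mk_self]
    change piR f (0 : GaloisR f) ^ 2 = 0
    rw [map_zero, zero_pow]
    norm_num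
  obtain ⟨a, ha⟩ := ker_piR hπA0
  -- the element D0 = f'(x²) is a unit
  have hsep : (FB f).Separable := PerfectField.separable_of_irreducible hirr
  obtain ⟨A, B, hAB⟩ := hsep
  have hFBρ2 : Polynomial.aeval (ρ^2) (FB f) = 0 := by
    rw [← sq_aeval2 hirr, AdjoinRoot.aeval_eq, AdjoinRoot.mk_self, zero_pow]
    norm_num
  have hD0unit : IsUnit (piR f (Polynomial.aeval (x^2) f.derivative)) := by
    rw [piR_aeval, map_pow, hπx]
    have hev : Polynomial.eval₂ (i0 f) (ρ^2) f.derivative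
        = Polynomial.aeval (ρ^2) (FB f).derivative := by
      rw [show (FB f).derivative = (f.derivative).map c42 from (Polynomial.derivative_map _ _),
        Polynomial.aeval_def, Polynomial.eval₂_map]
      rfl
    rw [hev]
    have h1 := congrArg (Polynomial.aeval (ρ^2)) hAB
    simp only [map_add, map_mul, map_one, hFBρ2, mul_zero, zero_add] at h1
    exact IsUnit.of_mul_eq_one _ ((mul_comm _ _).trans h1)
  obtain ⟨u, hu⟩ : ∃ u, Polynomial.aeval (x^2) f.derivative * u = 1 := by
    have h := isUnit_of_piR hD0unit
    exact ⟨↑h.unit⁻¹, h.unit.mul_inv⟩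
  set y : GaloisR f := x^2 - 2*(a*u) with hy
  have hfy : Polynomial.eval₂ (algebraMap (ZMod 4) (GaloisR f)) y f = 0 := by
    obtain ⟨k, hk⟩ := Polynomial.binomExpansion (f.map (algebraMap (ZMod 4) (GaloisR f)))
      (x^2) (-(2*(a*u)))
    have hyy : y = x^2 + -(2*(a*u)) := by rw [hy]; ring
    rw [← Polynomial.eval_map, hyy, hk, Polynomial.eval_map,
      show (f.map (algebraMap (ZMod 4) (GaloisR f))).derivative
        = (f.derivative).map (algebraMap (ZMod 4) (GaloisR f)) from Polynomial.derivative_map _ _,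
      Polynomial.eval_map, ← Polynomial.aeval_def, ← Polynomial.aeval_def, ha]
    linear_combination (-(2*a))*hu + (k*(a*u)*(a*u))*h4
  set φ : GaloisR f →+* GaloisR f :=
    AdjoinRoot.lift (algebraMap (ZMod 4) (GaloisR f)) y hfy with hφ
  have e1 : ∀ q : Polynomial (ZMod 4),
      φ (AdjoinRoot.mk f q) = Polynomial.aeval (R := ZMod 4) (A := GaloisR f) y q :=
    fun q => rfl
  have hπy : piR f y = ρ^2 := by
    rw [hy, map_sub, map_mul, map_pow, hπx, piR_two f hirr, zero_mul, sub_zero]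
  have hsq : ∀ z, piR f (φ z) = piR f z ^ 2 := by
    intro z
    induction z using AdjoinRoot.induction_on with
    | ih q =>
      rw [show φ (AdjoinRoot.mk f q) = Polynomial.aeval (R := ZMod 4) (A := GaloisR f) y q
          from e1 q,
        piR_aeval, hπy, piR_mk', sq_eval₂ hirr]
  have step : ∀ w : GaloisR f, piR f w ^ 2 = piR f w →
      (∃ s, w = 2*s) ∨ (∃ s, w = 1 + 2*s) := by
    intro w hw
    have hmul : piR f w * (piR f w - 1) = 0 := by linear_combination hw
    rcases mul_eq_zero.mp hmul with hcase | hcase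
    · exact Or.inl (ker_piR hcase)
    · have h0 : piR f (w - 1) = 0 := by rw [map_sub, map_one]; exact hcase
      obtain ⟨s, hs⟩ := ker_piR h0
      exact Or.inr ⟨s, by linear_combination hs⟩
  refine ⟨φ, hsq, ?_⟩
  intro c hc
  have h1 : piR f c ^ 2 = piR f c := by rw [← hsq c, hc]
  have hsplit : ∃ (e : ZMod 4) (w : GaloisR f),
      c = algebraMap (ZMod 4) (GaloisR f) e + 2*w := by
    rcases step c h1 with ⟨s, hs⟩ | ⟨s, hs⟩
    · exact ⟨0, s, by rw [map_zero, zero_add]; exact hs⟩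
    · exact ⟨1, s, by rw [map_one]; exact hs⟩
  obtain ⟨e, w, hcw⟩ := hsplit
  have hφe : φ (algebraMap (ZMod 4) (GaloisR f) e) = algebraMap (ZMod 4) (GaloisR f) e := by
    rw [algebraMap_mkC, e1, Polynomial.aeval_C, ← algebraMap_mkC]
  have heq : algebraMap (ZMod 4) (GaloisR f) e + 2 * φ w
      = algebraMap (ZMod 4) (GaloisR f) e + 2 * w := by
    have h5 : φ c = algebraMap (ZMod 4) (GaloisR f) e + 2 * φ w := by
      rw [hcw, map_add, map_mul, hφe, map_ofNat]
    rw [← h5, hc, hcw]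
  have h2 : 2 * (φ w - w) = 0 := by linear_combination heq
  obtain ⟨t, ht⟩ := two_mul_eq_zero hf h2
  have hπw : piR f (φ w) = piR f w := by
    have h6 : piR f (φ w - w) = 0 := by
      rw [ht, map_mul, piR_two f hirr, zero_mul]
    rw [map_sub] at h6
    linear_combination h6
  have h3 : piR f w ^ 2 = piR f w := by rw [← hsq w, hπw]
  rcases step w h3 with ⟨s, hs⟩ | ⟨s, hs⟩
  · refine ⟨e, ?_⟩
    rw [hcw, hs]
    linear_combination (-s)*h4
  · refine ⟨e + 2, ?_⟩
    rw [map_add, hcw, hs, map_ofNat]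
    linear_combination (-s)*h4


lemma zmod2p_eq {p : ℕ} (hp3 : 3 ≤ p) (hpodd : Odd p) {a b : ZMod (2*p)}
    (h2 : ZMod.castHom (⟨p, rfl⟩ : (2:ℕ) ∣ 2*p) (ZMod 2) a
        = ZMod.castHom (⟨p, rfl⟩ : (2:ℕ) ∣ 2*p) (ZMod 2) b)
    (hpp : ZMod.castHom (⟨2, mul_comm 2 p⟩ : p ∣ 2*p) (ZMod p) a
        = ZMod.castHom (⟨2, mul_comm 2 p⟩ : p ∣ 2*p) (ZMod p) b) :
    a = b := by
  haveI : NeZero (2*p) := ⟨by omega⟩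
  set d := a - b with hd
  have h2' : ZMod.castHom (⟨p, rfl⟩ : (2:ℕ) ∣ 2*p) (ZMod 2) d = 0 := by
    rw [hd, map_sub, h2, sub_self]
  have hp' : ZMod.castHom (⟨2, mul_comm 2 p⟩ : p ∣ 2*p) (ZMod p) d = 0 := by
    rw [hd, map_sub, hpp, sub_self]
  have hv2 : (2:ℕ) ∣ d.val := by
    apply (ZMod.natCast_eq_zero_iff _ _).mp
    rw [ZMod.castHom_apply] at h2'
    rw [ZMod.natCast_val]
    exact h2'
  have hvp : p ∣ d.val := by
    apply (ZMod.natCast_eq_zero_iff _ _).mp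
    rw [ZMod.castHom_apply] at hp'
    rw [ZMod.natCast_val]
    exact hp'
  have hdvd : (2*p) ∣ d.val :=
    Nat.Coprime.mul_dvd_of_dvd_of_dvd (Nat.coprime_two_left.mpr hpodd) hv2 hvp
  have hlt : d.val < 2*p := ZMod.val_lt d
  have hv0 : d.val = 0 := Nat.eq_zero_of_dvd_of_lt hdvd hlt
  exact sub_eq_zero.mp ((ZMod.val_eq_zero d).mp hv0)

lemma exists_pow_eq_pp2 {p g : ℕ} (hp : p.Prime) (hpodd : Odd p) (hgodd : Odd g)
    (hg1 : orderOf (g : ZMod p) = p - 1) (hp8 : p % 8 = 1 ∨ p % 8 = 7) :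
    ∃ n0 : ℕ, ((p : ZMod (2*p)) + 2) = (g : ZMod (2*p))^(2*n0) := by
  haveI : Fact p.Prime := ⟨hp⟩
  haveI : NeZero (2*p) := ⟨by have := hp.two_le; omega⟩
  obtain ⟨kp, hkp⟩ := hpodd
  have hple : 2 ≤ p := hp.two_le
  have hp3 : 3 ≤ p := by omega
  have hp2 : p ≠ 2 := by omega
  obtain ⟨c, hc⟩ := (ZMod.exists_sq_eq_two_iff hp2).mpr hp8
  have h2ne : (2 : ZMod p) ≠ 0 := by
    intro h
    have h' : ((2:ℕ) : ZMod p) = 0 := by exact_mod_cast h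
    rw [ZMod.natCast_eq_zero_iff] at h'
    have := Nat.le_of_dvd (by norm_num) h'
    omega
  have hcne : c ≠ 0 := by rintro rfl; rw [mul_zero] at hc; exact h2ne hc
  have hgp1 : (g:ZMod p)^(p-1) = 1 := by
    have h' := pow_orderOf_eq_one (g : ZMod p)
    rwa [hg1] at h'
  have hgu : IsUnit (g : ZMod p) := by
    apply IsUnit.of_mul_eq_one ((g:ZMod p)^(p-2))
    rw [← pow_succ']
    have h' : p - 2 + 1 = p - 1 := by omega
    rw [h', hgp1]
  have hcu : IsUnit c := hcne.isUnit
  have hord : orderOf hgu.unit = p - 1 := by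
    have h' : orderOf ((hgu.unit : (ZMod p)ˣ) : ZMod p) = orderOf hgu.unit := orderOf_units
    rw [hgu.unit_spec] at h'
    rw [← h', hg1]
  have htop : Subgroup.zpowers hgu.unit = ⊤ := by
    apply Subgroup.eq_top_of_card_eq
    rw [Nat.card_zpowers, hord, Nat.card_eq_fintype_card, ZMod.card_units_eq_totient,
      Nat.totient_prime hp]
  have hmem : hcu.unit ∈ Subgroup.zpowers hgu.unit := htop ▸ Subgroup.mem_top _
  have hfin : IsOfFinOrder hgu.unit := by
    apply orderOf_pos_iff.mp
    rw [hord]; omega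
  obtain ⟨m, hm⟩ := (Submonoid.mem_powers_iff _ _).mp (hfin.mem_powers_iff_mem_zpowers.mpr hmem)
  have hgm : (g : ZMod p)^m = c := by
    calc (g:ZMod p)^m = ((hgu.unit^m : (ZMod p)ˣ) : ZMod p) := by
          rw [Units.val_pow_eq_pow_val, hgu.unit_spec]
      _ = c := by rw [hm, hcu.unit_spec]
  have hg2m : (g : ZMod p)^(2*m) = 2 := by
    rw [mul_comm 2 m, pow_mul, pow_two, hgm, ← hc]
  refine ⟨m, ?_⟩
  have hpmod2 : (p : ZMod 2) = 1 := by
    rw [← ZMod.natCast_mod p 2, show p % 2 = 1 by omega]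
    norm_num
  have hgmod2 : (g : ZMod 2) = 1 := by
    rw [← ZMod.natCast_mod g 2, Nat.odd_iff.mp hgodd]
    norm_num
  apply zmod2p_eq hp3 ⟨kp, hkp⟩
  · rw [map_add, map_pow, map_natCast, map_natCast, map_ofNat, hpmod2, hgmod2, one_pow]
    decide
  · rw [map_add, map_pow, map_natCast, map_natCast, map_ofNat, ZMod.natCast_self, hg2m,
      zero_add]

end Stmt16

open Stmt16 in
theorem stmt16 (p g r : ℕ) (hp : p.Prime) (hpodd : Odd p)
    (hgodd : Odd g)
    (hg1 : orderOf (g : ZMod p) = p - 1)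
    (hg2 : orderOf (g : ZMod (2 * p)) = p - 1)
    (hr : orderOf (2 : ZMod p) = r)
    (f : Polynomial (ZMod 4)) (hf : f.Monic) (hfdeg : f.natDegree = r)
    (hfirr : Irreducible (f.map (ZMod.castHom (by norm_num : (2:ℕ) ∣ 4) (ZMod 2))))
    (β : (GaloisR f)ˣ) (hβ : orderOf β = p)
    (γ : (GaloisR f)ˣ) (hγ : γ = -β)
    (hp8 : p % 8 = 1 ∨ p % 8 = 7)
    (hunit : IsUnit (S0val p g f γ)) :
    ∀ j < 2, ∀ k : ℕ,
      (GammaP p g f γ j).coeff k ∈ Set.range (algebraMap (ZMod 4) (GaloisR f)) ∧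
      (LambdaP p g f γ j).coeff k ∈ Set.range (algebraMap (ZMod 4) (GaloisR f)) := by
  classical
  haveI : Fact p.Prime := ⟨hp⟩
  haveI : NeZero (2*p) := ⟨by have := hp.two_le; omega⟩
  obtain ⟨kp, hkp⟩ := id hpodd
  have hple := hp.two_le
  have hp3 : 3 ≤ p := by omega
  have hirr' : Irreducible (FB f) := hfirr
  have h4 := four_eq_zero f
  have hr1 : 1 ≤ f.natDegree := by
    rw [hfdeg, ← hr]
    rcases Nat.eq_zero_or_pos (orderOf (2 : ZMod p)) with h0 | h0
    · exfalso
      have h2ne : (2 : ZMod p) ≠ 0 := by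
        intro h
        have h' : ((2:ℕ) : ZMod p) = 0 := by exact_mod_cast h
        rw [ZMod.natCast_eq_zero_iff] at h'
        have := Nat.le_of_dvd (by norm_num) h'
        omega
      have hpow := ZMod.pow_card_sub_one_eq_one h2ne
      have hdvd := orderOf_dvd_of_pow_eq_one hpow
      rw [h0] at hdvd
      have := zero_dvd_iff.mp hdvd
      omega
    · exact h0
  have hne2 : (2 : GaloisR f) ≠ 0 := by
    intro h20
    have h2a : AdjoinRoot.mk f (Polynomial.C 2) = 0 := by
      rw [← algebraMap_mkC, map_ofNat]
      exact h20
    rw [AdjoinRoot.mk_eq_zero] at h2a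
    obtain ⟨q, hq⟩ := h2a
    have hq0 : q ≠ 0 := by
      rintro rfl
      rw [mul_zero] at hq
      have h' := congrArg (fun P => Polynomial.coeff P 0) hq
      simp only [Polynomial.coeff_C_zero, Polynomial.coeff_zero] at h'
      exact (by decide : (2 : ZMod 4) ≠ 0) h'
    have hdeg := congrArg Polynomial.natDegree hq
    rw [Polynomial.natDegree_C, hf.natDegree_mul' hq0] at hdeg
    omega
  have hm1 : (-1 : GaloisR f) ≠ 1 := by
    intro h
    apply hne2
    linear_combination -h
  have hu_ne : (-1 : (GaloisR f)ˣ) ≠ 1 := by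
    intro h
    apply hm1
    have h' := congrArg (Units.val) h
    rw [Units.val_neg, Units.val_one] at h'
    exact h'
  have hβp : β ^ p = 1 := by rw [← hβ]; exact pow_orderOf_eq_one β
  have hγv : ((γ : (GaloisR f)ˣ) : GaloisR f) = -((β : (GaloisR f)ˣ) : GaloisR f) := by
    rw [hγ, Units.val_neg]
  have hβvp : ((β : (GaloisR f)ˣ) : GaloisR f)^p = 1 := by
    rw [← Units.val_pow_eq_pow_val, hβp, Units.val_one]
  have hγ2 : γ^2 = β^2 := by
    refine Units.ext ?_
    rw [Units.val_pow_eq_pow_val, Units.val_pow_eq_pow_val, hγv]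
    ring
  have hγ2p : γ ^ (2*p) = 1 := by
    rw [pow_mul, hγ2, ← pow_mul, mul_comm 2 p, pow_mul, hβp, one_pow]
  have hcop2p : Nat.Coprime 2 p := Nat.coprime_two_left.mpr ⟨kp, hkp⟩
  have horder : orderOf γ = 2 * p := by
    have hd2p : orderOf γ ∣ 2*p := orderOf_dvd_of_pow_eq_one hγ2p
    have hpd : p ∣ orderOf γ := by
      have h1 : β ^ (2 * orderOf γ) = 1 := by
        rw [pow_mul, ← hγ2, ← pow_mul, mul_comm 2 (orderOf γ), pow_mul,
          pow_orderOf_eq_one, one_pow]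
      have hdvd := orderOf_dvd_of_pow_eq_one h1
      rw [hβ] at hdvd
      exact Nat.Coprime.dvd_of_dvd_mul_left (hcop2p.symm) hdvd
    have h2d : 2 ∣ orderOf γ := by
      by_contra h2d
      have hodd : Odd (orderOf γ) := Nat.odd_iff.mpr (by omega)
      obtain ⟨kk, hkk⟩ := hpd
      have h1 : ((γ : (GaloisR f)ˣ) : GaloisR f) ^ orderOf γ = 1 := by
        rw [← Units.val_pow_eq_pow_val, pow_orderOf_eq_one, Units.val_one]
      have hoddpk : Odd (p*kk) := hkk ▸ hodd
      have hnp := Odd.neg_pow hoddpk (((β : (GaloisR f)ˣ)) : GaloisR f)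
      rw [hγv, hkk, hnp, pow_mul, hβvp, one_pow] at h1
      exact hm1 h1
    have h2pd : 2*p ∣ orderOf γ := Nat.Coprime.mul_dvd_of_dvd_of_dvd hcop2p h2d hpd
    exact Nat.dvd_antisymm hd2p h2pd
  obtain ⟨φ, hsq, hfix⟩ := exists_frobenius hf hirr'
  set b : GaloisR f := ((β : (GaloisR f)ˣ) : GaloisR f) with hb
  set binv : GaloisR f := ((β⁻¹ : (GaloisR f)ˣ) : GaloisR f) with hbinv
  have hbb : b * binv = 1 := by rw [hb, hbinv, ← Units.val_mul, mul_inv_cancel, Units.val_one]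
  have hbp : b ^ p = 1 := by rw [hb, ← Units.val_pow_eq_pow_val, hβp, Units.val_one]
  have hbinvp : binv ^ p = 1 := by
    rw [hbinv, ← Units.val_pow_eq_pow_val, inv_pow, hβp, inv_one, Units.val_one]
  have hφb : φ b = b * b := by
    set t : GaloisR f := φ b * binv * binv with htdef
    have hπt : piR f t = 1 := by
      have h9 : piR f b * piR f binv = 1 := by rw [← map_mul, hbb, map_one]
      calc piR f t = piR f (φ b) * piR f binv * piR f binv := by
            rw [htdef, map_mul, map_mul]
        _ = (piR f b * piR f binv)^2 := by rw [hsq b]; ring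
        _ = 1 := by rw [h9, one_pow]
    have hπt0 : piR f (t - 1) = 0 := by rw [map_sub, map_one, hπt, sub_self]
    obtain ⟨w, hw⟩ := ker_piR hπt0
    have htw : t = 1 + 2*w := by linear_combination hw
    have htp : t ^ p = 1 := by
      rw [htdef, mul_pow, mul_pow, ← map_pow, hbp, hbinvp, map_one, one_mul, mul_one]
    have ht2 : t * t = 1 := by
      rw [htw]
      linear_combination (w + w*w) * h4
    have htt : t ^ p = t := by
      rw [hkp, pow_succ, pow_mul]
      rw [show t^2 = t*t from sq t, ht2, one_pow, one_mul]
    have ht1 : t = 1 := by rw [← htt, htp]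
    calc φ b = φ b * ((b * binv) * (b * binv)) := by rw [hbb]; ring
      _ = t * (b * b) := by rw [htdef]; ring
      _ = b * b := by rw [ht1, one_mul]
  have hγcoe : ((γ : (GaloisR f)ˣ) : GaloisR f) = -b := hγv
  have hR : ((γ : (GaloisR f)ˣ) : GaloisR f)^(p+2) = -(b*b) := by
    have hodd2 : Odd (p+2) := ⟨kp+1, by omega⟩
    have hnp := Odd.neg_pow hodd2 b
    rw [hγcoe, hnp, pow_add, hbp, one_mul, pow_two]
  have hφγ : φ (((γ : (GaloisR f)ˣ)) : GaloisR f)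
      = ((γ : (GaloisR f)ˣ) : GaloisR f)^(p+2) := by
    rw [hR, hγcoe, map_neg, hφb]
  have hφγm : ∀ m : ℕ, φ (((γ : (GaloisR f)ˣ) : GaloisR f)^m)
      = ((γ : (GaloisR f)ˣ) : GaloisR f)^((p+2)*m) := by
    intro m
    rw [map_pow, hφγ, ← pow_mul]
  have hpoweq : ∀ A B : ℕ, A % (2*p) = B % (2*p) →
      ((γ : (GaloisR f)ˣ) : GaloisR f)^A = ((γ : (GaloisR f)ˣ) : GaloisR f)^B := by
    intro A B hAB
    rw [← Units.val_pow_eq_pow_val, ← Units.val_pow_eq_pow_val]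
    congr 1
    rw [← pow_mod_orderOf γ A, ← pow_mod_orderOf γ B, horder, hAB]
  set pp2 : ZMod (2*p) := (p : ZMod (2*p)) + 2 with hpp2def
  obtain ⟨n0, hn0⟩ := exists_pow_eq_pp2 hp ⟨kp, hkp⟩ hgodd hg1 hp8
  have hn0' : pp2 = (g : ZMod (2*p))^(2*n0) := by rw [hpp2def]; exact hn0
  have hppval : pp2.val = p + 2 := by
    rw [hpp2def]
    have h' : ((p : ZMod (2*p)) + 2) = ((p + 2 : ℕ) : ZMod (2*p)) := by push_cast; ring
    rw [h', ZMod.val_natCast, Nat.mod_eq_of_lt (by omega)]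
  have hkey : ∀ v : ZMod (2*p), φ (((γ : (GaloisR f)ˣ) : GaloisR f)^(v.val))
      = ((γ : (GaloisR f)ˣ) : GaloisR f)^((pp2 * v).val) := by
    intro v
    rw [hφγm]
    apply hpoweq
    rw [ZMod.val_mul, hppval, Nat.mod_mod_of_dvd _ dvd_rfl]
  have hgzp1 : (g : ZMod (2*p))^(p-1) = 1 := by
    have h' := pow_orderOf_eq_one (g : ZMod (2*p))
    rwa [hg2] at h'
  have hgzu : IsUnit (g : ZMod (2*p)) := by
    apply IsUnit.of_mul_eq_one ((g : ZMod (2*p))^(p-2))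
    rw [← pow_succ']
    have h' : p - 2 + 1 = p - 1 := by omega
    rw [h', hgzp1]
  have hppu : IsUnit pp2 := by rw [hn0']; exact hgzu.pow _
  have hinj : Function.Injective (fun v : ZMod (2*p) => pp2 * v) := by
    intro v1 v2 h12
    have h13 := congrArg (fun t => ((hppu.unit⁻¹ : (ZMod (2*p))ˣ) : ZMod (2*p)) * t) h12
    simp only at h13
    rw [← mul_assoc, ← mul_assoc, IsUnit.val_inv_mul, one_mul, one_mul] at h13
    exact h13
  have hNpos : 0 < (p-1)/2 := by omega
  have hDim : ∀ j', (Dcl p g j').image (fun v => pp2 * v) = Dcl p g j' := by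
    intro j'
    apply Finset.eq_of_subset_of_card_le
    · intro w hw
      rw [Finset.mem_image] at hw
      obtain ⟨v, hv, rfl⟩ := hw
      rw [Dcl, Finset.mem_image] at hv ⊢
      obtain ⟨n, hn, rfl⟩ := hv
      rw [Finset.mem_range] at hn
      refine ⟨(n0 + n) % ((p-1)/2), Finset.mem_range.mpr (Nat.mod_lt _ hNpos), ?_⟩
      rw [hn0', ← pow_add]
      have hmod : (2*((n0+n) % ((p-1)/2)) + j') % (p - 1) = (2*n0 + (2*n+j')) % (p-1) := by
        have h1 : (n0+n) % ((p-1)/2) ≡ n0+n [MOD (p-1)/2] := Nat.mod_modEq _ _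
        have h2 := (h1.mul_left' 2).add_right j'
        have hN : 2 * ((p-1)/2) = p - 1 := by omega
        rw [hN] at h2
        calc (2*((n0+n) % ((p-1)/2)) + j') % (p - 1)
            = (2*(n0+n) + j') % (p-1) := h2
          _ = (2*n0 + (2*n+j')) % (p-1) := by ring_nf
      calc (g : ZMod (2*p)) ^ (2*((n0+n) % ((p-1)/2)) + j')
          = (g : ZMod (2*p)) ^ ((2*((n0+n) % ((p-1)/2)) + j') % orderOf (g : ZMod (2*p))) :=
            (pow_mod_orderOf _ _).symm
        _ = (g : ZMod (2*p)) ^ ((2*n0 + (2*n+j')) % orderOf (g : ZMod (2*p))) := by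
            rw [hg2, hmod]
        _ = (g : ZMod (2*p)) ^ (2*n0 + (2*n+j')) := pow_mod_orderOf _ _
    · rw [Finset.card_image_of_injective _ hinj]
  have hEim : ∀ j', (Ecl p g j').image (fun v => pp2 * v) = Ecl p g j' := by
    intro j'
    conv_rhs => rw [Ecl, ← hDim j']
    rw [Ecl, Finset.image_image, Finset.image_image]
    apply Finset.image_congr
    intro x _
    simp only [Function.comp_apply]
    ring
  have prodinv : ∀ T : Finset (ZMod (2*p)), T.image (fun v => pp2 * v) = T →
      ∀ k : ℕ,
        (∏ v ∈ T, (Polynomial.X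
          - Polynomial.C (((γ : (GaloisR f)ˣ) : GaloisR f)^v.val))).coeff k
        ∈ Set.range (algebraMap (ZMod 4) (GaloisR f)) := by
    intro T hT k
    set P := ∏ v ∈ T, (Polynomial.X
      - Polynomial.C (((γ : (GaloisR f)ˣ) : GaloisR f)^v.val)) with hP
    have hmap : P.map φ = P := by
      rw [hP, ← Polynomial.coe_mapRingHom, map_prod]
      have hterm : ∀ v ∈ T, (Polynomial.mapRingHom φ) (Polynomial.X
            - Polynomial.C (((γ : (GaloisR f)ˣ) : GaloisR f)^v.val))
          = Polynomial.X - Polynomial.C (((γ : (GaloisR f)ˣ) : GaloisR f)^((pp2*v).val)) := by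
        intro v _
        rw [Polynomial.coe_mapRingHom, Polynomial.map_sub, Polynomial.map_X, Polynomial.map_C,
          hkey v]
      rw [Finset.prod_congr rfl hterm]
      conv_rhs => rw [← hT]
      rw [Finset.prod_image (fun x _ y _ h => hinj h)]
    have hcoef := congrArg (fun Q => Polynomial.coeff Q k) hmap
    simp only [Polynomial.coeff_map] at hcoef
    exact hfix _ hcoef
  intro j hj k
  constructor
  · exact prodinv (Dcl p g j) (hDim j) k
  · exact prodinv (Ecl p g j) (hEim j) k
end

section
/- Let P ∈ Z_4[X] be a non-constant polynomial with P(0) = 1 such that P(γ^v) = 0 (evaluating the image of P in R[X]) for every v ∈ Z_{2p} \ {0, p}, and such that P(1) ∈ {0, 2} and P(-1) ∈ {0, 2} (values in Z_4). Then deg P ≥ 2p - 1. Furthermore, if either P(1) = P(-1) = 0 or P(1) = P(-1) = 2, then deg P ≥ 2p. -/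
open Polynomial

def cmap : ZMod 4 →+* ZMod 2 := ZMod.castHom (by norm_num : (2:ℕ) ∣ 4) (ZMod 2)

lemma cmap_two_dvd : ∀ a : ZMod 4, cmap a = 0 → 2 ∣ a := by
  have h : ∀ a : ZMod 4, (ZMod.cast a : ZMod 2) = 0 → a = 0 ∨ a = 2 := by decide
  intro a ha
  rcases h a (by simpa [cmap, ZMod.castHom_apply] using ha) with h' | h' <;> subst h'
  exacts [dvd_zero 2, ⟨1, rfl⟩]

lemma cmap_two_mul : ∀ a : ZMod 4, 2 * a = 0 → cmap a = 0 := by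
  have h : ∀ a : ZMod 4, 2 * a = 0 → (ZMod.cast a : ZMod 2) = 0 := by decide
  intro a ha
  simpa [cmap, ZMod.castHom_apply] using h a ha

lemma cmap_two_eq_two : ∀ a : ZMod 4, 2 * a = 2 → cmap a = 1 := by
  have h : ∀ a : ZMod 4, 2 * a = 2 → (ZMod.cast a : ZMod 2) = 1 := by decide
  intro a ha
  simpa [cmap, ZMod.castHom_apply] using h a ha

lemma exists_half (D : Polynomial (ZMod 4)) (h : D.map cmap = 0) : ∃ T, D = 2 * T := by
  have h2 : Polynomial.C (2 : ZMod 4) ∣ D := by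
    rw [Polynomial.C_dvd_iff_dvd_coeff]
    intro i
    have := congrArg (fun q => Polynomial.coeff q i) h
    simp only [Polynomial.coeff_map, Polynomial.coeff_zero] at this
    exact cmap_two_dvd _ this
  obtain ⟨T, hT⟩ := h2
  refine ⟨T, ?_⟩
  rw [hT, map_ofNat]

lemma map_cmap_eq_zero (D : Polynomial (ZMod 4)) (h : 2 * D = 0) : D.map cmap = 0 := by
  have h2 : (2 : Polynomial (ZMod 4)) = Polynomial.C 2 := (map_ofNat Polynomial.C 2).symm
  ext i
  rw [Polynomial.coeff_map, Polynomial.coeff_zero]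
  apply cmap_two_mul
  have := congrArg (fun q => Polynomial.coeff q i) h
  simp only [h2, Polynomial.coeff_C_mul, Polynomial.coeff_zero] at this
  exact this

lemma one_add_sq_zero_pow {A : Type*} [CommRing A] (t : A) (ht : t * t = 0) (n : ℕ) :
    (1 + t) ^ n = 1 + n * t := by
  induction n with
  | zero => simp
  | succ n ih =>
    rw [pow_succ, ih]
    push_cast
    linear_combination (n : A) * ht

lemma card_le_natDegree {F : Type*} [CommRing F] [IsDomain F] (Q : Polynomial F)
    (hQ : Q ≠ 0) (s : Finset F) (h : ∀ x ∈ s, Q.eval x = 0) : s.card ≤ Q.natDegree := by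
  classical
  have hsub : s ⊆ Q.roots.toFinset := fun x hx =>
    Multiset.mem_toFinset.2 ((Polynomial.mem_roots hQ).2 (h x hx))
  calc s.card ≤ Q.roots.toFinset.card := Finset.card_le_card hsub
    _ ≤ Multiset.card Q.roots := Q.roots.toFinset_card_le
    _ ≤ Q.natDegree := Q.card_roots'
set_option maxHeartbeats 1000000 in
theorem stmt17 (p g r : ℕ) (hp : p.Prime) (hpodd : Odd p)
    (hgodd : Odd g)
    (hg1 : orderOf (g : ZMod p) = p - 1)
    (hg2 : orderOf (g : ZMod (2 * p)) = p - 1)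
    (hr : orderOf (2 : ZMod p) = r)
    (f : Polynomial (ZMod 4)) (hf : f.Monic) (hfdeg : f.natDegree = r)
    (hfirr : Irreducible (f.map (ZMod.castHom (by norm_num : (2:ℕ) ∣ 4) (ZMod 2))))
    (β : (GaloisR f)ˣ) (hβ : orderOf β = p)
    (γ : (GaloisR f)ˣ) (hγ : γ = -β)
    (P : Polynomial (ZMod 4)) (hPnc : 0 < P.natDegree) (hP0 : P.coeff 0 = 1)
    (hroots : ∀ v : ZMod (2 * p), v ≠ 0 → v ≠ (p : ZMod (2 * p)) →
      Polynomial.aeval ((γ : GaloisR f) ^ v.val) P = 0)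
    (h1 : P.eval 1 = 0 ∨ P.eval 1 = 2)
    (hm1 : P.eval (-1) = 0 ∨ P.eval (-1) = 2) :
    2 * p - 1 ≤ P.natDegree ∧
    (((P.eval 1 = 0 ∧ P.eval (-1) = 0) ∨ (P.eval 1 = 2 ∧ P.eval (-1) = 2)) →
      2 * p ≤ P.natDegree) := by
  classical
  have hp2 : 2 ≤ p := hp.two_le
  have hp0 : 0 < p := hp.pos
  haveI : NeZero (2 * p) := ⟨by omega⟩
  -- the residue field
  set fb : Polynomial (ZMod 2) := f.map cmap with hfbdef
  have hfirr' : Irreducible fb := hfirr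
  have hfbm : fb.Monic := hf.map cmap
  haveI hImax : (Ideal.span {fb}).IsMaximal :=
    PrincipalIdealRing.isMaximal_of_irreducible hfirr'
  set F := Polynomial (ZMod 2) ⧸ Ideal.span {fb} with hFdef
  set mkF : Polynomial (ZMod 2) →+* F := Ideal.Quotient.mk (Ideal.span {fb}) with hmkF
  set φ : ZMod 2 →+* F := mkF.comp Polynomial.C with hφ
  set ψ : Polynomial (ZMod 4) →+* F := mkF.comp (Polynomial.mapRingHom cmap) with hψ
  have hψf : ∀ a ∈ Ideal.span {f}, ψ a = 0 := by
    intro a ha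
    obtain ⟨b, hb⟩ := Ideal.mem_span_singleton'.1 ha
    have hab : a.map cmap = (b.map cmap) * fb := by rw [← hb, Polynomial.map_mul]
    show mkF (a.map cmap) = 0
    rw [hab]
    exact Ideal.Quotient.eq_zero_iff_mem.2 (Ideal.mul_mem_left _ _ (Ideal.subset_span rfl))
  set ρ : GaloisR f →+* F := Ideal.Quotient.lift (Ideal.span {f}) ψ hψf with hρ
  have hρmk : ∀ A : Polynomial (ZMod 4),
      ρ (Ideal.Quotient.mk (Ideal.span {f}) A) = mkF (A.map cmap) := fun A => rfl
  have hφinj : Function.Injective φ := φ.injective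
  have h2kX : (2 : Polynomial (ZMod 2)) = 0 := by
    rw [← map_ofNat (Polynomial.C : ZMod 2 →+* Polynomial (ZMod 2)) 2,
      show (2 : ZMod 2) = 0 by decide, map_zero]
  have hF2 : (2 : F) = 0 := by
    rw [← map_ofNat φ 2, show (2 : ZMod 2) = 0 by decide, map_zero]
  have hnegF : ∀ x : F, -x = x := fun x => by linear_combination (-x) * hF2
  have h4R : (4 : GaloisR f) = 0 := by
    rw [← map_ofNat (algebraMap (ZMod 4) (GaloisR f)) 4,
      show (4 : ZMod 4) = 0 by decide, map_zero]
  -- kernel lemmas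
  have hker2 : ∀ x : GaloisR f, 2 * x = 0 → ρ x = 0 := by
    intro x hx
    obtain ⟨A, rfl⟩ := Ideal.Quotient.mk_surjective x
    have h2A : (2 * A : Polynomial (ZMod 4)) ∈ Ideal.span {f} := by
      rw [← Ideal.Quotient.eq_zero_iff_mem, map_mul, map_ofNat]
      exact hx
    obtain ⟨B, hB⟩ := Ideal.mem_span_singleton'.1 h2A
    have hBc : B.map cmap = 0 := by
      have h0 : ((2 : Polynomial (ZMod 4)) * A).map cmap = (B.map cmap) * fb := by
        rw [← hB, Polynomial.map_mul]
      rw [Polynomial.map_mul, Polynomial.map_ofNat, h2kX, zero_mul] at h0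
      exact (mul_eq_zero.1 h0.symm).resolve_right hfbm.ne_zero
    obtain ⟨B₂, hB₂⟩ := exists_half B hBc
    have hzero : 2 * (A - f * B₂) = 0 := by linear_combination -hB + f * hB₂
    have hmap0 : (A - f * B₂).map cmap = 0 := map_cmap_eq_zero _ hzero
    have hAc : A.map cmap = fb * (B₂.map cmap) := by
      rw [Polynomial.map_sub, Polynomial.map_mul, sub_eq_zero] at hmap0
      exact hmap0
    rw [hρmk, hAc]
    exact Ideal.Quotient.eq_zero_iff_mem.2 (Ideal.mul_mem_right _ _ (Ideal.subset_span rfl))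
  have hcsurj : Function.Surjective cmap := by
    intro b
    refine ⟨(b.val : ZMod 4), ?_⟩
    rw [map_natCast]
    exact ZMod.natCast_rightInverse b
  have hker : ∀ x : GaloisR f, ρ x = 0 → ∃ y, x = 2 * y := by
    intro x hx
    obtain ⟨A, rfl⟩ := Ideal.Quotient.mk_surjective x
    rw [hρmk] at hx
    obtain ⟨G, hG⟩ := Ideal.mem_span_singleton'.1 (Ideal.Quotient.eq_zero_iff_mem.1 hx)
    obtain ⟨G', hG'⟩ := Polynomial.map_surjective cmap hcsurj G
    have hmap0 : (A - f * G').map cmap = 0 := by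
      rw [Polynomial.map_sub, Polynomial.map_mul, hG', sub_eq_zero, ← hG, mul_comm]
    obtain ⟨T, hT⟩ := exists_half _ hmap0
    refine ⟨Ideal.Quotient.mk _ T, ?_⟩
    have hA : A = f * G' + 2 * T := by linear_combination hT
    have hf0 : Ideal.Quotient.mk (Ideal.span {f}) f = 0 :=
      Ideal.Quotient.eq_zero_iff_mem.2 (Ideal.subset_span rfl)
    rw [hA, map_add, map_mul, hf0, zero_mul, zero_add, map_mul, map_ofNat]
  -- evaluation compatibility
  have hEv : ∀ (A : Polynomial (ZMod 4)) (x : GaloisR f),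
      ρ (Polynomial.aeval x A) = ((A.map cmap).map φ).eval (ρ x) := by
    intro A x
    rw [Polynomial.aeval_def, Polynomial.hom_eval₂, Polynomial.eval_map,
      Polynomial.eval₂_map]
    congr 1
    exact RingHom.ext_zmod _ _
  -- facts about β and bb
  have hβp : (β : GaloisR f) ^ p = 1 := by
    have h := pow_orderOf_eq_one β
    rw [hβ] at h
    simpa using congrArg Units.val h
  set bb : F := ρ (β : GaloisR f) with hbbdef
  have hbbp : bb ^ p = 1 := by rw [← map_pow, hβp, map_one]
  have hbb1 : bb ≠ 1 := by
    intro h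
    have hz : ρ ((β : GaloisR f) - 1) = 0 := by
      rw [map_sub, map_one, ← hbbdef, h, sub_self]
    obtain ⟨y, hy⟩ := hker _ hz
    have hβR : (β : GaloisR f) = 1 + 2 * y := by linear_combination hy
    have ht : (2 * y) * (2 * y) = 0 := by linear_combination (y * y) * h4R
    have hpow : (β : GaloisR f) ^ p = 1 + p * (2 * y) := by
      rw [hβR, one_add_sq_zero_pow _ ht]
    rw [hβp] at hpow
    have h2y0 : ((p : ℕ) : GaloisR f) * (2 * y) = 0 := by linear_combination -hpow
    obtain ⟨l, hl⟩ := hpodd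
    have h2l : ((2 * l + 1 : ℕ) : GaloisR f) * (2 * y) = 0 := by rw [← hl]; exact h2y0
    push_cast at h2l
    have h2y : (2 : GaloisR f) * y = 0 := by linear_combination h2l - ((l : GaloisR f) * y) * h4R
    have hβ1 : (β : GaloisR f) = 1 := by rw [hβR, h2y, add_zero]
    have : β = 1 := Units.ext hβ1
    rw [this, orderOf_one] at hβ
    omega
  have hbborder : orderOf bb = p := by
    have hdvd : orderOf bb ∣ p := orderOf_dvd_of_pow_eq_one hbbp
    rcases hp.eq_one_or_self_of_dvd _ hdvd with h | h
    · exact absurd (orderOf_eq_one_iff.1 h) hbb1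
    · exact h
  have hbb0 : bb ≠ 0 := by
    intro h
    rw [h, zero_pow hp0.ne'] at hbbp
    exact zero_ne_one hbbp
  have hinj : ∀ i < p, ∀ j < p, bb ^ i = bb ^ j → i = j := by
    have key : ∀ i j, i < p → j < p → i < j → bb ^ i = bb ^ j → False := by
      intro i j hi hj hlt hij
      have h1' : bb ^ (j - i) = 1 := by
        have h2' : bb ^ i * bb ^ (j - i) = bb ^ i * 1 := by
          rw [mul_one, ← pow_add, show i + (j - i) = j by omega]
          exact hij.symm
        exact mul_left_cancel₀ (pow_ne_zero i hbb0) h2'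
      have hdvd := orderOf_dvd_of_pow_eq_one h1'
      rw [hbborder] at hdvd
      have := Nat.le_of_dvd (by omega) hdvd
      omega
    intro i hi j hj hij
    rcases lt_trichotomy i j with h | h | h
    · exact absurd hij (fun hh => key i j hi hj h hh)
    · exact h
    · exact absurd hij.symm (fun hh => key j i hj hi h hh)
  -- roots as natural numbers
  have hvfact : ∀ w : ℕ, 0 < w → w < 2 * p → w ≠ p →
      Polynomial.aeval ((γ : GaloisR f) ^ w) P = 0 := by
    intro w hw0 hw2p hwp
    have hv1 : ((w : ZMod (2 * p))) ≠ 0 := by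
      intro h
      have := (ZMod.natCast_eq_zero_iff w (2 * p)).1 h
      have := Nat.le_of_dvd hw0 this
      omega
    have hv2 : ((w : ZMod (2 * p))) ≠ ((p : ℕ) : ZMod (2 * p)) := by
      intro h
      have hmod := (ZMod.natCast_eq_natCast_iff _ _ _).1 h
      have : w % (2 * p) = p % (2 * p) := hmod
      rw [Nat.mod_eq_of_lt hw2p, Nat.mod_eq_of_lt (by omega)] at this
      exact hwp this
    have := hroots (w : ZMod (2 * p)) hv1 hv2
    rwa [ZMod.val_natCast_of_lt hw2p] at this
  -- γ facts
  have hγval : (γ : GaloisR f) = -(β : GaloisR f) := by rw [hγ]; rfl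
  have hγp : (γ : GaloisR f) ^ p = -1 := by
    have hnp := hpodd.neg_pow (β : GaloisR f)
    rw [hγval, hnp, hβp]
  have hργ : ρ (γ : GaloisR f) = bb := by rw [hγval, map_neg, ← hbbdef]; exact hnegF bb
  -- polynomial division over ZMod 2
  set Pb : Polynomial (ZMod 2) := P.map cmap with hPbdef
  set M : Polynomial (ZMod 2) := Polynomial.X ^ p - 1 with hMdef
  have hM : M.Monic := by
    have := Polynomial.monic_X_pow_sub_C (1 : ZMod 2) hp0.ne'
    rw [hMdef]
    simpa using this
  have hMdegnat : M.natDegree = p := by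
    rw [hMdef, show (1 : Polynomial (ZMod 2)) = Polynomial.C 1 by rw [Polynomial.C_1]]
    exact Polynomial.natDegree_X_pow_sub_C
  set Qb : Polynomial (ZMod 2) := Pb /ₘ M with hQbdef
  set Sb : Polynomial (ZMod 2) := Pb %ₘ M with hSbdef
  have hdiv : M * Qb + Sb = Pb := by
    rw [add_comm]
    exact Polynomial.modByMonic_add_div Pb M
  have hPb1 : Pb.eval 1 = cmap (P.eval 1) := by
    rw [hPbdef, Polynomial.eval_map, Polynomial.eval₂_at_one]
  -- roots of Pb over F
  have hPF : ∀ m < p, ((Pb.map φ)).eval (bb ^ m) = 0 := by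
    intro m hm
    rcases Nat.eq_zero_or_pos m with rfl | hm0
    · have h0 : Pb.eval 1 = 0 := by
        rw [hPb1]
        rcases h1 with h | h <;> rw [h]
        · exact map_zero cmap
        · exact cmap_two_mul 2 (by decide)
      rw [pow_zero, Polynomial.eval_map, Polynomial.eval₂_at_one, h0, map_zero]
    · have hz := hvfact m hm0 (by omega) (by omega)
      have h2 := hEv P ((γ : GaloisR f) ^ m)
      rw [hz, map_zero, map_pow, hργ] at h2
      exact h2.symm
  have hMF : ∀ m : ℕ, ((M.map φ)).eval (bb ^ m) = 0 := by
    intro m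
    rw [hMdef, Polynomial.map_sub, Polynomial.map_pow, Polynomial.map_one, Polynomial.map_X]
    simp only [Polynomial.eval_sub, Polynomial.eval_pow, Polynomial.eval_X, Polynomial.eval_one]
    rw [← pow_mul, mul_comm, pow_mul, hbbp, one_pow, sub_self]
  have himgcard : ∀ a b : ℕ, b ≤ p → ((Finset.Ico a b).image (bb ^ ·)).card = b - a := by
    intro a b hb
    rw [Finset.card_image_of_injOn, Nat.card_Ico]
    intro i hi j hj hij
    simp only [Finset.coe_Ico, Set.mem_Ico] at hi hj
    exact hinj i (by omega) j (by omega) hij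
  have hSb : Sb = 0 := by
    by_contra hSb0
    have hdeg : Sb.natDegree < p := by
      have hlt := Polynomial.degree_modByMonic_lt Pb hM
      rw [← hSbdef] at hlt
      rw [Polynomial.degree_eq_natDegree hM.ne_zero, hMdegnat] at hlt
      exact (Polynomial.natDegree_lt_iff_degree_lt hSb0).2 hlt
    have hSF0 : Sb.map φ ≠ 0 := fun h => hSb0 ((Polynomial.map_eq_zero_iff hφinj).1 h)
    have hroots' : ∀ x ∈ (Finset.Ico 0 p).image (bb ^ ·), (Sb.map φ).eval x = 0 := by
      intro x hx
      obtain ⟨m, hm, rfl⟩ := Finset.mem_image.1 hx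
      rw [Finset.mem_Ico] at hm
      have hdd := congrArg (fun q => (Polynomial.map φ q).eval (bb ^ m)) hdiv
      simp only [Polynomial.map_add, Polynomial.map_mul, Polynomial.eval_add,
        Polynomial.eval_mul] at hdd
      rw [hMF m, zero_mul, zero_add] at hdd
      rw [hdd]
      exact hPF m hm.2
    have hcard := himgcard 0 p le_rfl
    have hle := card_le_natDegree _ hSF0 _ hroots'
    rw [hcard, Polynomial.natDegree_map_eq_of_injective hφinj] at hle
    omega
  have hPbMQ : Pb = M * Qb := by rw [← hdiv, hSb, add_zero]
  have hPb0 : Pb ≠ 0 := by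
    intro h
    have hc : Pb.coeff 0 = 1 := by rw [hPbdef, Polynomial.coeff_map, hP0, map_one]
    rw [h, Polynomial.coeff_zero] at hc
    exact zero_ne_one hc
  have hQb0 : Qb ≠ 0 := fun h => hPb0 (by rw [hPbMQ, h, mul_zero])
  -- lift Qb
  obtain ⟨Q', hQ'⟩ := Polynomial.map_surjective cmap hcsurj Qb
  have hDmap : (P - (Polynomial.X ^ p - 1) * Q').map cmap = 0 := by
    rw [Polynomial.map_sub, Polynomial.map_mul, Polynomial.map_sub, Polynomial.map_pow,
      Polynomial.map_X, Polynomial.map_one, hQ', ← hPbdef, ← hMdef, hPbMQ, sub_self]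
  obtain ⟨T, hT⟩ := exists_half _ hDmap
  have hPQT : P = (Polynomial.X ^ p - 1) * Q' + 2 * T := by linear_combination hT
  have hAev : ∀ x : GaloisR f,
      Polynomial.aeval x P = (x ^ p - 1) * Polynomial.aeval x Q' + 2 * Polynomial.aeval x T := by
    intro x
    conv_lhs => rw [hPQT]
    simp only [map_add, map_mul, map_sub, map_pow, Polynomial.aeval_X, map_one, map_ofNat]
  have hQ'F : (Q'.map cmap).map φ = Qb.map φ := by rw [hQ']
  -- roots of T over F
  have hTroot : ∀ m, 1 ≤ m → m < p → ((T.map cmap).map φ).eval (bb ^ m) = 0 := by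
    intro m h1m hmp
    set w := if Even m then m else m + p with hw
    have hwE : Even w := by
      rcases Nat.even_or_odd m with he | ho
      · rw [hw, if_pos he]; exact he
      · rw [hw, if_neg (Nat.not_even_iff_odd.2 ho)]
        exact Odd.add_odd ho hpodd
    have hw0 : 0 < w := by rw [hw]; split <;> omega
    have hwlt : w < 2 * p := by rw [hw]; split <;> omega
    have hwp : w ≠ p := by
      intro h
      rw [h] at hwE
      exact (Nat.not_odd_iff_even.2 hwE) hpodd
    have h0 := hvfact w hw0 hwlt hwp
    rw [hAev] at h0
    have hγwp : ((γ : GaloisR f) ^ w) ^ p = 1 := by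
      rw [← pow_mul, mul_comm, pow_mul, hγp]
      exact Even.neg_one_pow (α := GaloisR f) hwE
    rw [hγwp, sub_self, zero_mul, zero_add] at h0
    have hk := hker2 _ h0
    rw [hEv, map_pow, hργ] at hk
    have hbbw : bb ^ w = bb ^ m := by
      rw [hw]; split
      · rfl
      · rw [pow_add, hbbp, mul_one]
    rwa [hbbw] at hk
  -- roots of Qb over F
  have hQroot : ∀ m, 1 ≤ m → m < p → ((Qb.map φ)).eval (bb ^ m) = 0 := by
    intro m h1m hmp
    set w := if Odd m then m else m + p with hw
    have hwO : Odd w := by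
      rcases Nat.even_or_odd m with he | ho
      · rw [hw, if_neg (Nat.not_odd_iff_even.2 he)]
        exact Even.add_odd he hpodd
      · rw [hw, if_pos ho]; exact ho
    have hw0 : 0 < w := by rw [hw]; split <;> omega
    have hwlt : w < 2 * p := by rw [hw]; split <;> omega
    have hwp : w ≠ p := by rw [hw]; split <;> omega
    have h0 := hvfact w hw0 hwlt hwp
    rw [hAev] at h0
    have hγwp : ((γ : GaloisR f) ^ w) ^ p = -1 := by
      rw [← pow_mul, mul_comm, pow_mul, hγp]
      exact Odd.neg_one_pow (α := GaloisR f) hwO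
    rw [hγwp] at h0
    have h2 : 2 * (Polynomial.aeval ((γ : GaloisR f) ^ w) T
        - Polynomial.aeval ((γ : GaloisR f) ^ w) Q') = 0 := by
      linear_combination h0
    have hk := hker2 _ h2
    rw [map_sub, hEv, hEv, map_pow, hργ, sub_eq_zero] at hk
    have hbbw : bb ^ w = bb ^ m := by
      rw [hw]; split
      · rfl
      · rw [pow_add, hbbp, mul_one]
    rw [hQ'F, hbbw] at hk
    rw [← hk]
    exact hTroot m h1m hmp
  -- degree bounds
  have hQF0 : Qb.map φ ≠ 0 := fun h => hQb0 ((Polynomial.map_eq_zero_iff hφinj).1 h)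
  have hPbdeg : Pb.natDegree = p + Qb.natDegree := by
    rw [hPbMQ, hM.natDegree_mul' hQb0, hMdegnat]
  have hmaple : Pb.natDegree ≤ P.natDegree := Polynomial.natDegree_map_le
  have hQbdeg1 : p - 1 ≤ Qb.natDegree := by
    have hall : ∀ x ∈ (Finset.Ico 1 p).image (bb ^ ·), (Qb.map φ).eval x = 0 := by
      intro x hx
      obtain ⟨m, hm, rfl⟩ := Finset.mem_image.1 hx
      rw [Finset.mem_Ico] at hm
      exact hQroot m hm.1 hm.2
    have hle := card_le_natDegree _ hQF0 _ hall
    rw [himgcard 1 p le_rfl, Polynomial.natDegree_map_eq_of_injective hφinj] at hle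
    exact hle
  constructor
  · omega
  · rintro hcase
    have hev1 : P.eval 1 = 2 * T.eval 1 := by
      conv_lhs => rw [hPQT]
      simp only [Polynomial.eval_add, Polynomial.eval_mul, Polynomial.eval_sub,
        Polynomial.eval_pow, Polynomial.eval_X, Polynomial.eval_one, Polynomial.eval_ofNat,
        one_pow, sub_self, zero_mul, zero_add]
    have hevm1 : P.eval (-1) = 2 * (T.eval (-1) - Q'.eval (-1)) := by
      conv_lhs => rw [hPQT]
      simp only [Polynomial.eval_add, Polynomial.eval_mul, Polynomial.eval_sub,
        Polynomial.eval_pow, Polynomial.eval_X, Polynomial.eval_one, Polynomial.eval_ofNat,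
        hpodd.neg_pow, one_pow]
      ring
    have hkey1 : cmap (T.eval 1) = (T.map cmap).eval 1 := by
      rw [Polynomial.eval_map, Polynomial.eval₂_at_one]
    have hkeyb : cmap (T.eval (-1)) = (T.map cmap).eval 1 := by
      rw [show (1 : ZMod 2) = cmap (-1) by decide, Polynomial.eval_map, Polynomial.eval₂_hom]
    have hkeyq : cmap (Q'.eval (-1)) = Qb.eval 1 := by
      rw [show (1 : ZMod 2) = cmap (-1) by decide, ← hQ', Polynomial.eval_map,
        Polynomial.eval₂_hom]
    have hQb1 : Qb.eval 1 = 0 := by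
      rcases hcase with ⟨hA, hB⟩ | ⟨hA, hB⟩
      · have e1 : cmap (T.eval 1) = 0 := cmap_two_mul _ (by rw [← hev1]; exact hA)
        have e2 : cmap (T.eval (-1) - Q'.eval (-1)) = 0 := cmap_two_mul _ (by rw [← hevm1]; exact hB)
        rw [map_sub, sub_eq_zero, hkeyb, hkeyq] at e2
        rw [← e2, ← hkey1]
        exact e1
      · have e1 : cmap (T.eval 1) = 1 := cmap_two_eq_two _ (by rw [← hev1]; exact hA)
        have e2 : cmap (T.eval (-1) - Q'.eval (-1)) = 1 := cmap_two_eq_two _ (by rw [← hevm1]; exact hB)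
        rw [map_sub, hkeyb, hkeyq] at e2
        rw [hkey1] at e1
        rw [e1] at e2
        linear_combination -e2
    have hQF1 : (Qb.map φ).eval 1 = 0 := by
      rw [Polynomial.eval_map, Polynomial.eval₂_at_one, hQb1, map_zero]
    have hQbdeg2 : p ≤ Qb.natDegree := by
      have hall : ∀ x ∈ (Finset.Ico 0 p).image (bb ^ ·), (Qb.map φ).eval x = 0 := by
        intro x hx
        obtain ⟨m, hm, rfl⟩ := Finset.mem_image.1 hx
        rw [Finset.mem_Ico] at hm
        rcases Nat.eq_zero_or_pos m with rfl | hm0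
        · rw [pow_zero]; exact hQF1
        · exact hQroot m hm0 hm.2
      have hle := card_le_natDegree _ hQF0 _ hall
      rw [himgcard 0 p le_rfl, Polynomial.natDegree_map_eq_of_injective hφinj] at hle
      omega
    omega
end
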